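/- arXiv:1810.03608 — 4 statements merged into one kernel-verified Lean document; each statement's English description precedes it below -/
import Mathlib

section
/- Discrete generalized Bihari inequality: Assume RSC and suppose δ is small enough that λ' := λ(1 − κδΛ/2) > 0. Then for all k ≥ 0 the oracle-iteration potential satisfies Ψ_{k+1} − Ψ_k ≤ −δ·λ'·F⁻¹(Ψ_k). -/
open scoped BigOperators

/-- The soft-thresholding (shrinkage) operator `𝒮(·,1)` applied entrywise. -/
noncomputable def soft (x : ℝ) : ℝ := Real.sign x * max (|x| - 1) 0

/-- Partial derivative of the loss `ℓ` at `θ` in coordinate `i`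
(the intercept coordinate is `none`). -/
noncomputable def gradAt {p : ℕ} (ℓ : (Option (Fin p) → ℝ) → ℝ)
    (θ : Option (Fin p) → ℝ) (i : Option (Fin p)) : ℝ :=
  fderiv ℝ ℓ θ (Pi.single i 1)

/-- Second partial derivative (Hessian entry) of `ℓ` at `θ`. -/
noncomputable def pderiv2 {p : ℕ} (ℓ : (Option (Fin p) → ℝ) → ℝ)
    (θ : Option (Fin p) → ℝ) (i j : Option (Fin p)) : ℝ :=
  fderiv ℝ (fun θ' => gradAt ℓ θ' j) θ (Pi.single i 1)

/-- `H̄(θ) = ∫₀¹ ∇²ℓ(θ⋆ + μ(θ − θ⋆)) dμ`, entrywise. -/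
noncomputable def Hbar {p : ℕ} (ℓ : (Option (Fin p) → ℝ) → ℝ)
    (θstar θ : Option (Fin p) → ℝ) (i j : Option (Fin p)) : ℝ :=
  ∫ μ in (0:ℝ)..(1:ℝ), pderiv2 ℓ (fun l => θstar l + μ * (θ l - θstar l)) i j

/-- Point on the segment from `θa` to `θb` at parameter `μ`. -/
def segPt {p : ℕ} (θa θb : Option (Fin p) → ℝ) (μ : ℝ) : Option (Fin p) → ℝ :=
  fun i => θa i + μ * (θb i - θa i)

/-- `θo` is an oracle estimator: it minimizes `ℓ` over `{θ : β_{Sᶜ} = 0}`. -/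
def OracleEst {p : ℕ} (ℓ : (Option (Fin p) → ℝ) → ℝ) (S : Finset (Fin p))
    (θo : Option (Fin p) → ℝ) : Prop :=
  (∀ j, j ∉ S → θo (some j) = 0) ∧
  ∀ θ : Option (Fin p) → ℝ, (∀ j, j ∉ S → θ (some j) = 0) → ℓ θo ≤ ℓ θ

/-- The GLBI iteration with parameters `κ, δ`:
`α_{k+1} = α_k − κδ∇_α ℓ(θ_k)`, `z_{k+1} = z_k − δ∇_β ℓ(θ_k)`, `β_{k+1} = κ𝒮(z_{k+1},1)`,
with `z_0 = β_0 = 0` (the initial intercept is arbitrary). -/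
def GLBIIter {p : ℕ} (ℓ : (Option (Fin p) → ℝ) → ℝ) (κ δ : ℝ)
    (θ : ℕ → Option (Fin p) → ℝ) (z : ℕ → Fin p → ℝ) : Prop :=
  (∀ j, z 0 j = 0) ∧ (∀ j, θ 0 (some j) = 0) ∧
  (∀ k, θ (k+1) none = θ k none - κ * δ * gradAt ℓ (θ k) none) ∧
  (∀ k j, z (k+1) j = z k j - δ * gradAt ℓ (θ k) (some j)) ∧
  (∀ k j, θ (k+1) (some j) = κ * soft (z (k+1) j))

/-- The oracle iteration: same recursion as GLBI but restricted to coordinates in `S`,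
with `z'_{k,Sᶜ} = β'_{k,Sᶜ} = 0`. -/
def OracleIter {p : ℕ} (ℓ : (Option (Fin p) → ℝ) → ℝ) (S : Finset (Fin p)) (κ δ : ℝ)
    (θ' : ℕ → Option (Fin p) → ℝ) (z' : ℕ → Fin p → ℝ) : Prop :=
  (∀ j, z' 0 j = 0) ∧ (∀ j, θ' 0 (some j) = 0) ∧
  (∀ k j, j ∉ S → z' k j = 0) ∧ (∀ k j, j ∉ S → θ' k (some j) = 0) ∧
  (∀ k, θ' (k+1) none = θ' k none - κ * δ * gradAt ℓ (θ' k) none) ∧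
  (∀ k, ∀ j ∈ S, z' (k+1) j = z' k j - δ * gradAt ℓ (θ' k) (some j)) ∧
  (∀ k, ∀ j ∈ S, θ' (k+1) (some j) = κ * soft (z' (k+1) j))

/-- Restricted strong convexity: `λ I ⪯ ∇²_{S_α,S_α} ℓ(θ) ⪯ Λ I` for every `θ` on the
segment between `θ'_k` and `θᵒ` (any `k ≥ 0`) or between `θ⋆` and `θᵒ`, stated via
quadratic forms on vectors supported on `S_α` (the intercept together with `S`). -/
def RSCcond {p : ℕ} (ℓ : (Option (Fin p) → ℝ) → ℝ) (S : Finset (Fin p))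
    (θstar θo : Option (Fin p) → ℝ) (θ' : ℕ → Option (Fin p) → ℝ) (lam Lam : ℝ) : Prop :=
  ∀ θ : Option (Fin p) → ℝ,
    ((∃ k : ℕ, ∃ μ ∈ Set.Icc (0:ℝ) 1, θ = segPt (θ' k) θo μ) ∨
      (∃ μ ∈ Set.Icc (0:ℝ) 1, θ = segPt θstar θo μ)) →
    ∀ v : Option (Fin p) → ℝ, (∀ j, j ∉ S → v (some j) = 0) →
      lam * ∑ i, v i ^ 2 ≤ ∑ i, ∑ i', v i * pderiv2 ℓ θ i i' * v i' ∧
      ∑ i, ∑ i', v i * pderiv2 ℓ θ i i' * v i' ≤ Lam * ∑ i, v i ^ 2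

/-- `irr̄ = H̄_{Sᶜ,S_α}(θ) · H̄_{S_α,S_α}(θ)⁻¹`. -/
noncomputable def irrMat {p : ℕ} (ℓ : (Option (Fin p) → ℝ) → ℝ)
    (θstar : Option (Fin p) → ℝ) (S : Finset (Fin p)) (θk : Option (Fin p) → ℝ) :
    Matrix {j : Fin p // j ∉ S} (Option {j : Fin p // j ∈ S}) ℝ :=
  (Matrix.of fun (jc : {j : Fin p // j ∉ S}) (a : Option {j : Fin p // j ∈ S}) =>
      Hbar ℓ θstar θk (some jc.1) (Option.map Subtype.val a)) *
    (Matrix.of fun (a b : Option {j : Fin p // j ∈ S}) =>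
      Hbar ℓ θstar θk (Option.map Subtype.val a) (Option.map Subtype.val b))⁻¹

/-- The increment vector `((α'_{k+1}/κ, z'_{k+1,S}) − (α'_k/κ, z'_{k,S}))` on `S_α`. -/
noncomputable def oracleDiff {p : ℕ} (κ : ℝ) (θ' : ℕ → Option (Fin p) → ℝ)
    (z' : ℕ → Fin p → ℝ) (S : Finset (Fin p)) (k : ℕ) :
    Option {j : Fin p // j ∈ S} → ℝ :=
  fun a =>
    match a with
    | none => θ' (k+1) none / κ - θ' k none / κ
    | some j => z' (k+1) j.1 - z' k j.1

/-- Irrepresentable condition: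
`sup_{K ≥ 1} ‖Σ_{k<K} irr̄_k ((α'_{k+1}/κ, z'_{k+1,S}) − (α'_k/κ, z'_{k,S}))‖_∞ < 1 − η/2`
and `sup_k ‖irr̄_k‖_∞ ≤ C` (maximum absolute row sums). -/
def IRRcond {p : ℕ} (ℓ : (Option (Fin p) → ℝ) → ℝ) (θstar : Option (Fin p) → ℝ)
    (S : Finset (Fin p)) (κ : ℝ) (θ' : ℕ → Option (Fin p) → ℝ) (z' : ℕ → Fin p → ℝ)
    (η C : ℝ) : Prop :=
  (∃ b, b < 1 - η / 2 ∧ ∀ K : ℕ, 1 ≤ K → ∀ jc : {j : Fin p // j ∉ S},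
      |∑ k ∈ Finset.range K,
        ((irrMat ℓ θstar S (θ' k)).mulVec (oracleDiff κ θ' z' S k)) jc| ≤ b) ∧
  (∀ k : ℕ, ∀ jc : {j : Fin p // j ∉ S},
      ∑ a : Option {j : Fin p // j ∈ S}, |irrMat ℓ θstar S (θ' k) jc a| ≤ C)

/-- `‖∇ℓ(θ)‖_∞`. -/
noncomputable def gradInfNorm {p : ℕ} (ℓ : (Option (Fin p) → ℝ) → ℝ)
    (θ : Option (Fin p) → ℝ) : ℝ :=
  ⨆ i : Option (Fin p), |gradAt ℓ θ i|

/-- `d_k = ‖(α'_k, β'_{k,S}) − (αᵒ, βᵒ_S)‖₂`. -/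
noncomputable def dOrc {p : ℕ} (S : Finset (Fin p)) (θo : Option (Fin p) → ℝ)
    (θ' : ℕ → Option (Fin p) → ℝ) (k : ℕ) : ℝ :=
  Real.sqrt ((θ' k none - θo none) ^ 2 + ∑ j ∈ S, (θ' k (some j) - θo (some j)) ^ 2)

/-- `β^o_min = min{|βᵒ_j| : βᵒ_j ≠ 0}`. -/
noncomputable def bomin {p : ℕ} (θo : Option (Fin p) → ℝ) : ℝ :=
  sInf {r : ℝ | ∃ j : Fin p, θo (some j) ≠ 0 ∧ r = |θo (some j)|}

/-- The function `F` of the (discrete) generalized Bihari inequality. -/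
noncomputable def Fpot (κ bo : ℝ) (s : ℕ) (x : ℝ) : ℝ :=
  x / (2 * κ) +
    (if x < bo ^ 2 then 0 else if x < s * bo ^ 2 then 2 * x / bo else 2 * Real.sqrt (s * x))

/-- `F⁻¹(x) = inf{y ≥ 0 : F(y) ≥ x}`. -/
noncomputable def FpotInv (κ bo : ℝ) (s : ℕ) (x : ℝ) : ℝ :=
  sInf {y : ℝ | 0 ≤ y ∧ x ≤ Fpot κ bo s y}

/-- The potential `Ψ_k = ‖βᵒ_S‖₁ − ⟨βᵒ_S, ρ'_{k,S}⟩ + d_k²/(2κ)` of the oracle iteration,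
where `ρ'_{k} = z'_k − 𝒮(z'_k,1)`. -/
noncomputable def PsiD {p : ℕ} (S : Finset (Fin p)) (θo : Option (Fin p) → ℝ) (κ : ℝ)
    (θ' : ℕ → Option (Fin p) → ℝ) (z' : ℕ → Fin p → ℝ) (k : ℕ) : ℝ :=
  (∑ j ∈ S, |θo (some j)|) - (∑ j ∈ S, θo (some j) * (z' k j - soft (z' k j))) +
    (dOrc S θo θ' k) ^ 2 / (2 * κ)

/-! ### Auxiliary lemmas -/

section GLBIAux

theorem GLBI_soft_eq (x : ℝ) :
    soft x = if 1 < x then x - 1 else if x < -1 then x + 1 else 0 := by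
  unfold soft
  rcases lt_trichotomy x 0 with h | h | h
  · rw [Real.sign_of_neg h, abs_of_neg h]
    split_ifs with h1 h2
    · linarith
    · rw [max_eq_left (by linarith)]; ring
    · rw [max_eq_right (by linarith)]; ring
  · subst h; norm_num
  · rw [Real.sign_of_pos h, abs_of_pos h]
    split_ifs with h1 h2
    · rw [max_eq_left (by linarith)]; ring
    · linarith
    · rw [max_eq_right (by linarith)]; ring

theorem GLBI_soft_zero : soft 0 = 0 := by simp [soft]

theorem GLBI_rho_abs_le (x : ℝ) : |x - soft x| ≤ 1 := by
  rw [GLBI_soft_eq]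
  split_ifs
  · simp
  · simp
  · rw [abs_le]; constructor <;> linarith

theorem GLBI_rho_of_soft_pos {x : ℝ} (h : 0 < soft x) : x - soft x = 1 := by
  rw [GLBI_soft_eq] at *; split_ifs at h ⊢ <;> [ring; linarith; linarith]

theorem GLBI_rho_of_soft_neg {x : ℝ} (h : soft x < 0) : x - soft x = -1 := by
  rw [GLBI_soft_eq] at *; split_ifs at h ⊢ <;> [linarith; ring; linarith]

theorem GLBI_soft_monot (a b : ℝ) : 0 ≤ ((a - soft a) - (b - soft b)) * soft a := by
  rcases lt_trichotomy (soft a) 0 with h | h | h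
  · rw [GLBI_rho_of_soft_neg h]
    nlinarith [abs_le.mp (GLBI_rho_abs_le b)]
  · simp [h]
  · rw [GLBI_rho_of_soft_pos h]
    nlinarith [abs_le.mp (GLBI_rho_abs_le b)]

theorem GLBI_stepj (κ δ bo gB Z Z1 : ℝ) (hκ : 0 < κ) (hZ1 : Z1 = Z - δ * gB) :
    bo * (Z - soft Z) - bo * (Z1 - soft Z1)
      + ((κ * soft Z1 - bo) ^ 2 - (κ * soft Z - bo) ^ 2) / (2 * κ)
      ≤ (-δ) * (gB * (κ * soft Z - bo)) + (κ * δ ^ 2 / 2) * gB ^ 2 := by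
  have h1 := GLBI_soft_monot Z1 Z
  set a := soft Z
  set b := soft Z1
  have hdiv : ((κ * b - bo) ^ 2 - (κ * a - bo) ^ 2) / (2 * κ)
      = κ * (b ^ 2 - a ^ 2) / 2 - bo * (b - a) := by
    field_simp; ring
  rw [hdiv]
  subst hZ1
  nlinarith [mul_nonneg hκ.le h1, mul_nonneg hκ.le (sq_nonneg (b - a + δ * gB))]

theorem GLBI_stepα (κ δ ao gA A A1 : ℝ) (hκ : 0 < κ) (hA1 : A1 = A - κ * δ * gA) :
    ((A1 - ao) ^ 2 - (A - ao) ^ 2) / (2 * κ)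
      = (-δ) * (gA * (A - ao)) + (κ * δ ^ 2 / 2) * gA ^ 2 := by
  subst hA1; field_simp; ring

theorem GLBI_term_bound (κ bo Z : ℝ) (hκ : 0 < κ)
    (hne : |bo| - bo * (Z - soft Z) ≠ 0) :
    bo ≠ 0 ∧ bo ^ 2 ≤ (κ * soft Z - bo) ^ 2 ∧
      |bo| - bo * (Z - soft Z) ≤ 2 * |κ * soft Z - bo| := by
  have hρ := abs_le.mp (GLBI_rho_abs_le Z)
  have hbo : bo ≠ 0 := by rintro rfl; simp at hne
  have hsb : soft Z * bo ≤ 0 := by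
    by_contra h
    push_neg at h
    rcases mul_pos_iff.mp h with ⟨hs, hb⟩ | ⟨hs, hb⟩
    · exact hne (by rw [GLBI_rho_of_soft_pos hs, abs_of_pos hb]; ring)
    · exact hne (by rw [GLBI_rho_of_soft_neg hs, abs_of_neg hb]; ring)
  have hsq : bo ^ 2 ≤ (κ * soft Z - bo) ^ 2 := by
    nlinarith [mul_nonneg hκ.le (neg_nonneg.mpr hsb), sq_nonneg (κ * soft Z)]
  refine ⟨hbo, hsq, ?_⟩
  have habs : |bo| ≤ |κ * soft Z - bo| := by
    rw [← Real.sqrt_sq_eq_abs, ← Real.sqrt_sq_eq_abs]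
    exact Real.sqrt_le_sqrt hsq
  have h1 : |bo * (Z - soft Z)| ≤ |bo| := by
    rw [abs_mul]
    exact mul_le_of_le_one_right (abs_nonneg _) (GLBI_rho_abs_le Z)
  have h2 : -(bo * (Z - soft Z)) ≤ |bo| := le_trans (neg_le_abs _) h1
  linarith

theorem GLBI_bilin_cs {ι : Type*} [Fintype ι] (M : ι → ι → ℝ) (hsym : ∀ i j, M i j = M j i)
    (hpsd : ∀ v : ι → ℝ, 0 ≤ ∑ i, ∑ j, v i * M i j * v j) (u v : ι → ℝ) :
    (∑ i, ∑ j, u i * M i j * v j) ^ 2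
      ≤ (∑ i, ∑ j, u i * M i j * u j) * (∑ i, ∑ j, v i * M i j * v j) := by
  have hBsymm : (∑ i, ∑ j, v i * M i j * u j) = ∑ i, ∑ j, u i * M i j * v j := by
    rw [Finset.sum_comm]
    refine Finset.sum_congr rfl fun i _ => Finset.sum_congr rfl fun j _ => ?_
    rw [hsym j i]; ring
  have key : ∀ t : ℝ, 0 ≤ (∑ i, ∑ j, v i * M i j * v j) * (t * t)
      + (2 * ∑ i, ∑ j, u i * M i j * v j) * t + (∑ i, ∑ j, u i * M i j * u j) := by
    intro t
    have h0 := hpsd (fun i => u i + t * v i)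
    have hterm : ∀ i j : ι, (u i + t * v i) * M i j * (u j + t * v j)
        = u i * M i j * u j + t * (u i * M i j * v j)
          + (t * (v i * M i j * u j) + (t * t) * (v i * M i j * v j)) := by
      intro i j; ring
    simp only [hterm, Finset.sum_add_distrib, ← Finset.mul_sum] at h0
    rw [hBsymm] at h0
    linarith
  have hd : discrim (∑ i, ∑ j, v i * M i j * v j) (2 * ∑ i, ∑ j, u i * M i j * v j)
      (∑ i, ∑ j, u i * M i j * u j) ≤ 0 := discrim_le_zero key
  rw [discrim] at hd
  nlinarith [hd]

theorem GLBI_coco {ι : Type*} [Fintype ι] (M : ι → ι → ℝ) (Lam : ℝ) (hLam : 0 ≤ Lam)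
    (hsym : ∀ i j, M i j = M j i)
    (hpsd : ∀ v : ι → ℝ, 0 ≤ ∑ i, ∑ j, v i * M i j * v j)
    (hub : ∀ v : ι → ℝ, (∑ i, ∑ j, v i * M i j * v j) ≤ Lam * ∑ i, v i ^ 2)
    (x : ι → ℝ) :
    ∑ i, (∑ j, M i j * x j) ^ 2 ≤ Lam * ∑ i, ∑ j, x i * M i j * x j := by
  set y : ι → ℝ := fun i => ∑ j, M i j * x j with hy
  have hyx : (∑ i, ∑ j, y i * M i j * x j) = ∑ i, y i ^ 2 := by
    refine Finset.sum_congr rfl fun i _ => ?_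
    rw [hy]; simp only
    rw [pow_two, Finset.mul_sum]
    refine Finset.sum_congr rfl fun j _ => by ring
  have hcs := GLBI_bilin_cs M hsym hpsd y x
  rw [hyx] at hcs
  have hyy := hub y
  have hxx := hpsd x
  have hy2 : (0:ℝ) ≤ ∑ i, y i ^ 2 := Finset.sum_nonneg fun i _ => sq_nonneg _
  rcases eq_or_lt_of_le hy2 with h | h
  · rw [← h]; exact mul_nonneg hLam hxx
  · nlinarith [hcs, hyy, h]

theorem GLBI_gradAt_contDiff {p : ℕ} {ℓ : (Option (Fin p) → ℝ) → ℝ} (hℓ : ContDiff ℝ 2 ℓ)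
    (i : Option (Fin p)) : ContDiff ℝ 1 (fun θ => gradAt ℓ θ i) :=
  (hℓ.fderiv_right (m := 1) (by norm_num)).clm_apply contDiff_const

theorem GLBI_pderiv2_continuous {p : ℕ} {ℓ : (Option (Fin p) → ℝ) → ℝ} (hℓ : ContDiff ℝ 2 ℓ)
    (i j : Option (Fin p)) : Continuous (fun θ => pderiv2 ℓ θ i j) := by
  have h2 : Continuous (fderiv ℝ (fun θ' => gradAt ℓ θ' j)) :=
    (GLBI_gradAt_contDiff hℓ j).continuous_fderiv (by norm_num)
  exact ((ContinuousLinearMap.apply ℝ ℝ (Pi.single i (1:ℝ))).continuous.comp h2)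

theorem GLBI_pderiv2_symm {p : ℕ} {ℓ : (Option (Fin p) → ℝ) → ℝ} (hℓ : ContDiff ℝ 2 ℓ)
    (θ : Option (Fin p) → ℝ) (i j : Option (Fin p)) :
    pderiv2 ℓ θ i j = pderiv2 ℓ θ j i := by
  have hd : Differentiable ℝ ℓ := hℓ.differentiable (by norm_num)
  have hd' : Differentiable ℝ (fderiv ℝ ℓ) :=
    (hℓ.fderiv_right (m := 1) (by norm_num)).differentiable (by norm_num)
  have hsymm := second_derivative_symmetric (f := ℓ) (f' := fderiv ℝ ℓ)
    (f'' := fderiv ℝ (fderiv ℝ ℓ) θ) (fun y => (hd y).hasFDerivAt) ((hd' θ).hasFDerivAt)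
  have key : ∀ a b : Option (Fin p), pderiv2 ℓ θ a b
      = fderiv ℝ (fderiv ℝ ℓ) θ (Pi.single a 1) (Pi.single b 1) := by
    intro a b
    have : (fun θ' => gradAt ℓ θ' b)
        = fun θ' => (ContinuousLinearMap.apply ℝ ℝ (Pi.single b (1:ℝ))) (fderiv ℝ ℓ θ') := rfl
    rw [pderiv2, this]
    rw [fderiv_comp' θ (ContinuousLinearMap.apply ℝ ℝ (Pi.single b (1:ℝ))).differentiableAt
      (hd' θ)]
    simp
  rw [key, key, hsymm]

/-- Segment as a function of `μ`. -/
noncomputable def GLBI_segf {p : ℕ} (θa θb : Option (Fin p) → ℝ) (μ : ℝ) :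
    Option (Fin p) → ℝ :=
  fun i => θa i + μ * (θb i - θa i)

theorem GLBI_segf_hasDerivAt {p : ℕ} (θa θb : Option (Fin p) → ℝ) (μ : ℝ) :
    HasDerivAt (fun μ => GLBI_segf θa θb μ) (fun i => θb i - θa i) μ := by
  have h : (fun μ => GLBI_segf θa θb μ) = fun μ : ℝ => θa + μ • (θb - θa) := by
    funext μ i; simp [GLBI_segf]
  rw [h]
  have := ((hasDerivAt_id μ).smul_const (θb - θa)).const_add θa
  change HasDerivAt _ (θb - θa) μ
  simpa using this

theorem GLBI_segf_continuous {p : ℕ} (θa θb : Option (Fin p) → ℝ) :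
    Continuous (fun μ : ℝ => GLBI_segf θa θb μ) := by
  apply continuous_pi; intro j
  exact continuous_const.add (continuous_id.mul continuous_const)

theorem GLBI_grad_seg_hasDerivAt {p : ℕ} {ℓ : (Option (Fin p) → ℝ) → ℝ}
    (hℓ : ContDiff ℝ 2 ℓ) (θa θb : Option (Fin p) → ℝ) (i : Option (Fin p)) (μ : ℝ) :
    HasDerivAt (fun μ => gradAt ℓ (GLBI_segf θa θb μ) i)
      (∑ l, (θb l - θa l) * pderiv2 ℓ (GLBI_segf θa θb μ) l i) μ := by
  have hG : Differentiable ℝ (fun θ => gradAt ℓ θ i) :=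
    (GLBI_gradAt_contDiff hℓ i).differentiable (by norm_num)
  have hc := (hG (GLBI_segf θa θb μ)).hasFDerivAt.comp_hasDerivAt μ
    (GLBI_segf_hasDerivAt θa θb μ)
  refine hc.congr_deriv ?_
  have hdecomp : (fun l => θb l - θa l) = ∑ l : Option (Fin p), Pi.single l (θb l - θa l) := by
    rw [Finset.univ_sum_single]
  rw [hdecomp, map_sum]
  refine Finset.sum_congr rfl fun l _ => ?_
  have : Pi.single l (θb l - θa l)
      = (θb l - θa l) • (Pi.single l (1:ℝ) : Option (Fin p) → ℝ) := by
    funext m; rcases eq_or_ne m l with h | h <;> simp [Pi.single_apply, h]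
  rw [this, map_smul, smul_eq_mul, pderiv2]

theorem GLBI_grad_diff_eq {p : ℕ} {ℓ : (Option (Fin p) → ℝ) → ℝ}
    (hℓ : ContDiff ℝ 2 ℓ) (θa θb : Option (Fin p) → ℝ) (i : Option (Fin p)) :
    gradAt ℓ θb i - gradAt ℓ θa i
      = ∑ l, (θb l - θa l) * ∫ μ in (0:ℝ)..1, pderiv2 ℓ (GLBI_segf θa θb μ) l i := by
  have hcont : ∀ l, Continuous fun μ : ℝ => pderiv2 ℓ (GLBI_segf θa θb μ) l i := fun l =>
    (GLBI_pderiv2_continuous hℓ l i).comp (GLBI_segf_continuous θa θb)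
  have hftc := intervalIntegral.integral_eq_sub_of_hasDerivAt
    (f := fun μ => gradAt ℓ (GLBI_segf θa θb μ) i)
    (f' := fun μ => ∑ l, (θb l - θa l) * pderiv2 ℓ (GLBI_segf θa θb μ) l i)
    (a := 0) (b := 1)
    (fun μ _ => GLBI_grad_seg_hasDerivAt hℓ θa θb i μ)
    (by
      apply Continuous.intervalIntegrable
      exact continuous_finset_sum _ fun l _ => continuous_const.mul (hcont l))
  have h0 : GLBI_segf θa θb 0 = θa := by funext i; simp [GLBI_segf]
  have h1 : GLBI_segf θa θb 1 = θb := by funext i; simp [GLBI_segf]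
  have hftc' : (∫ μ in (0:ℝ)..1, ∑ l, (θb l - θa l) * pderiv2 ℓ (GLBI_segf θa θb μ) l i)
      = gradAt ℓ θb i - gradAt ℓ θa i := by simpa [h0, h1] using hftc
  rw [← hftc', intervalIntegral.integral_finset_sum
    (fun l _ => ((hcont l).intervalIntegrable 0 1).const_mul _)]
  refine Finset.sum_congr rfl fun l _ => ?_
  rw [intervalIntegral.integral_const_mul]

theorem GLBI_quadform_integral {p : ℕ} {ℓ : (Option (Fin p) → ℝ) → ℝ}
    (hℓ : ContDiff ℝ 2 ℓ) (θa θb : Option (Fin p) → ℝ) (v : Option (Fin p) → ℝ) :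
    ∑ i, ∑ i', v i * (∫ μ in (0:ℝ)..1, pderiv2 ℓ (GLBI_segf θa θb μ) i i') * v i'
      = ∫ μ in (0:ℝ)..1, ∑ i, ∑ i', v i * pderiv2 ℓ (GLBI_segf θa θb μ) i i' * v i' := by
  have hcont : ∀ a b : Option (Fin p),
      Continuous fun μ : ℝ => pderiv2 ℓ (GLBI_segf θa θb μ) a b := fun a b =>
    (GLBI_pderiv2_continuous hℓ a b).comp (GLBI_segf_continuous θa θb)
  rw [intervalIntegral.integral_finset_sum]
  · refine Finset.sum_congr rfl fun i _ => ?_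
    rw [intervalIntegral.integral_finset_sum
      (f := fun i' μ => v i * pderiv2 ℓ (GLBI_segf θa θb μ) i i' * v i')
      (fun i' _ => ((continuous_const.mul (hcont i i')).mul continuous_const).intervalIntegrable 0 1)]
    refine Finset.sum_congr rfl fun i' _ => ?_
    rw [← intervalIntegral.integral_const_mul, ← intervalIntegral.integral_mul_const]
  · intro i _
    exact (continuous_finset_sum _ fun i' _ =>
      (continuous_const.mul (hcont i i')).mul continuous_const).intervalIntegrable 0 1

theorem GLBI_oracle_grad_zero {p : ℕ} {ℓ : (Option (Fin p) → ℝ) → ℝ} {S : Finset (Fin p)}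
    {θo : Option (Fin p) → ℝ} (hℓ : ContDiff ℝ 2 ℓ) (hθo : OracleEst ℓ S θo)
    (i : Option (Fin p)) (hi : i = none ∨ ∃ j ∈ S, i = some j) :
    gradAt ℓ θo i = 0 := by
  set v : Option (Fin p) → ℝ := Pi.single i 1 with hv
  have hlin : HasDerivAt (fun t : ℝ => θo + t • v) v 0 := by
    simpa using ((hasDerivAt_id (0:ℝ)).smul_const v).const_add θo
  have hd : Differentiable ℝ ℓ := hℓ.differentiable (by norm_num)
  have hcomp : HasDerivAt (fun t : ℝ => ℓ (θo + t • v)) (fderiv ℝ ℓ (θo + (0:ℝ) • v) v) 0 :=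
    (hd (θo + (0:ℝ) • v)).hasFDerivAt.comp_hasDerivAt 0 hlin
  have h0 : θo + (0:ℝ) • v = θo := by simp
  rw [h0] at hcomp
  have hmin : IsLocalMin (fun t : ℝ => ℓ (θo + t • v)) 0 := by
    apply Filter.Eventually.of_forall
    intro t
    simp only [h0]
    apply hθo.2
    intro j hj
    have hvj : v (some j) = 0 := by
      rw [hv]
      rcases hi with h | ⟨j0, hj0, h⟩
      · subst h; simp
      · subst h
        exact Pi.single_eq_of_ne (by simp; rintro rfl; exact hj hj0) 1
    simp [hθo.1 j hj, hvj]
  have := hmin.hasDerivAt_eq_zero hcomp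
  rw [gradAt, ← hv, this]

/-- Indicator of the augmented support. -/
def GLBI_bS {p : ℕ} (S : Finset (Fin p)) : Option (Fin p) → Bool
  | none => true
  | some j => decide (j ∈ S)

end GLBIAux

set_option maxHeartbeats 1000000 in
/-- **Discrete generalized Bihari inequality.**
Under RSC, if `λ' = λ(1 − κδΛ/2) > 0`, then for all `k ≥ 0`,
`Ψ_{k+1} − Ψ_k ≤ −δλ'·F⁻¹(Ψ_k)`. -/
theorem glbi_discrete_bihari {p : ℕ}
    (ℓ : (Option (Fin p) → ℝ) → ℝ) (hℓ : ContDiff ℝ 2 ℓ)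
    (θstar : Option (Fin p) → ℝ) (S : Finset (Fin p))
    (hS : ∀ j, j ∈ S ↔ θstar (some j) ≠ 0)
    (θo : Option (Fin p) → ℝ) (hθo : OracleEst ℓ S θo)
    (κ δ : ℝ) (hκpos : 0 < κ) (hδpos : 0 < δ)
    (θ' : ℕ → Option (Fin p) → ℝ) (z' : ℕ → Fin p → ℝ)
    (horacle : OracleIter ℓ S κ δ θ' z')
    (lam Lam : ℝ) (hlam : 0 < lam) (hLam : 0 < Lam)
    (hRSC : RSCcond ℓ S θstar θo θ' lam Lam)
    (hlam' : 0 < lam * (1 - κ * δ * Lam / 2)) :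
    ∀ k : ℕ,
      PsiD S θo κ θ' z' (k + 1) - PsiD S θo κ θ' z' k
        ≤ -(δ * (lam * (1 - κ * δ * Lam / 2)) *
            FpotInv κ (bomin θo) S.card (PsiD S θo κ θ' z' k)) := by
  classical
  obtain ⟨hz0, hθ0, hzSc, hθSc, hαit, hzit, hθit⟩ := horacle
  have hbrep : ∀ k : ℕ, ∀ j ∈ S, θ' k (some j) = κ * soft (z' k j) := by
    intro k j hj
    cases k with
    | zero => rw [hθ0 j, hz0 j, GLBI_soft_zero]; ring
    | succ m => exact hθit m j hj
  have hc2 : 0 < 1 - κ * δ * Lam / 2 := by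
    rcases mul_pos_iff.mp hlam' with ⟨_, h⟩ | ⟨h, _⟩
    · exact h
    · linarith
  intro k
  -- basic vectors
  set E : Option (Fin p) → ℝ := fun i => θ' k i - θo i with hE
  set G : Option (Fin p) → ℝ := fun i =>
    match i with
    | none => gradAt ℓ (θ' k) none
    | some j => if j ∈ S then gradAt ℓ (θ' k) (some j) else 0 with hG
  set Hb : Option (Fin p) → Option (Fin p) → ℝ :=
    fun l i => ∫ μ in (0:ℝ)..1, pderiv2 ℓ (GLBI_segf θo (θ' k) μ) l i with hHb
  set Mm : Option (Fin p) → Option (Fin p) → ℝ :=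
    fun l i => if GLBI_bS S l = true ∧ GLBI_bS S i = true then Hb l i else 0 with hMm
  have hbSsome : ∀ j : Fin p, GLBI_bS S (some j) = true ↔ j ∈ S := by
    intro j; simp [GLBI_bS]
  have hbSnone : GLBI_bS S none = true := rfl
  have hEsupp : ∀ j, j ∉ S → E (some j) = 0 := by
    intro j hj; simp [hE, hθSc k j hj, hθo.1 j hj]
  have hGsupp : ∀ j, j ∉ S → G (some j) = 0 := by
    intro j hj; simp [hG, hj]
  -- RSC along the segment from θo to θ' k
  have hRSCseg : ∀ μ ∈ Set.Icc (0:ℝ) 1, ∀ v : Option (Fin p) → ℝ,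
      (∀ j, j ∉ S → v (some j) = 0) →
      lam * ∑ i, v i ^ 2
          ≤ (∑ i, ∑ i', v i * pderiv2 ℓ (GLBI_segf θo (θ' k) μ) i i' * v i') ∧
        (∑ i, ∑ i', v i * pderiv2 ℓ (GLBI_segf θo (θ' k) μ) i i' * v i')
          ≤ Lam * ∑ i, v i ^ 2 := by
    intro μ hμ v hv
    refine hRSC _ (Or.inl ⟨k, 1 - μ, ⟨by linarith [hμ.2], by linarith [hμ.1]⟩, ?_⟩) v hv
    funext i; simp only [segPt, GLBI_segf]; ring
  -- quadratic form bounds for Hb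
  have hQHb : ∀ v : Option (Fin p) → ℝ, (∀ j, j ∉ S → v (some j) = 0) →
      lam * ∑ i, v i ^ 2 ≤ (∑ i, ∑ i', v i * Hb i i' * v i') ∧
      (∑ i, ∑ i', v i * Hb i i' * v i') ≤ Lam * ∑ i, v i ^ 2 := by
    intro v hv
    have hq : (∑ i, ∑ i', v i * Hb i i' * v i')
        = ∫ μ in (0:ℝ)..1, ∑ i, ∑ i', v i * pderiv2 ℓ (GLBI_segf θo (θ' k) μ) i i' * v i' := by
      rw [hHb]; exact GLBI_quadform_integral hℓ θo (θ' k) v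
    have hcont : Continuous fun μ : ℝ =>
        ∑ i, ∑ i', v i * pderiv2 ℓ (GLBI_segf θo (θ' k) μ) i i' * v i' := by
      apply continuous_finset_sum; intro i _
      apply continuous_finset_sum; intro i' _
      exact (continuous_const.mul
        ((GLBI_pderiv2_continuous hℓ i i').comp (GLBI_segf_continuous θo (θ' k)))).mul
        continuous_const
    constructor
    · rw [hq]
      have : lam * ∑ i, v i ^ 2
          = ∫ _ in (0:ℝ)..1, lam * ∑ i, v i ^ 2 := by simp
      rw [this]
      exact intervalIntegral.integral_mono_on (by norm_num)
        (intervalIntegrable_const) (hcont.intervalIntegrable 0 1)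
        (fun μ hμ => (hRSCseg μ hμ v hv).1)
    · rw [hq]
      have : Lam * ∑ i, v i ^ 2
          = ∫ _ in (0:ℝ)..1, Lam * ∑ i, v i ^ 2 := by simp
      rw [this]
      exact intervalIntegral.integral_mono_on (by norm_num)
        (hcont.intervalIntegrable 0 1) (intervalIntegrable_const)
        (fun μ hμ => (hRSCseg μ hμ v hv).2)
  -- truncation
  set trunc : (Option (Fin p) → ℝ) → (Option (Fin p) → ℝ) :=
    fun v i => if GLBI_bS S i = true then v i else 0 with htrunc
  have htrunc_supp : ∀ v : Option (Fin p) → ℝ, ∀ j, j ∉ S → trunc v (some j) = 0 := by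
    intro v j hj
    simp only [htrunc]
    rw [if_neg (by simpa [hbSsome] using hj)]
  have htrunc_sq : ∀ v : Option (Fin p) → ℝ, (∑ i, trunc v i ^ 2) ≤ ∑ i, v i ^ 2 := by
    intro v
    refine Finset.sum_le_sum fun i _ => ?_
    simp only [htrunc]
    split_ifs
    · exact le_rfl
    · simpa using sq_nonneg (v i)
  have hQMH : ∀ v : Option (Fin p) → ℝ,
      (∑ i, ∑ j, v i * Mm i j * v j) = ∑ i, ∑ j, trunc v i * Hb i j * trunc v j := by
    intro v
    refine Finset.sum_congr rfl fun i _ => Finset.sum_congr rfl fun j _ => ?_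
    simp only [hMm, htrunc]
    by_cases hbi : GLBI_bS S i = true <;> by_cases hbj : GLBI_bS S j = true <;>
      simp [hbi, hbj]
  have hpsd : ∀ v : Option (Fin p) → ℝ, 0 ≤ ∑ i, ∑ j, v i * Mm i j * v j := by
    intro v
    rw [hQMH v]
    have h := (hQHb (trunc v) (htrunc_supp v)).1
    have hsq : (0:ℝ) ≤ ∑ i, trunc v i ^ 2 := Finset.sum_nonneg fun i _ => sq_nonneg _
    nlinarith
  have hub : ∀ v : Option (Fin p) → ℝ,
      (∑ i, ∑ j, v i * Mm i j * v j) ≤ Lam * ∑ i, v i ^ 2 := by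
    intro v
    rw [hQMH v]
    calc (∑ i, ∑ j, trunc v i * Hb i j * trunc v j)
        ≤ Lam * ∑ i, trunc v i ^ 2 := (hQHb (trunc v) (htrunc_supp v)).2
      _ ≤ Lam * ∑ i, v i ^ 2 := by
          exact mul_le_mul_of_nonneg_left (htrunc_sq v) hLam.le
  have hMsym : ∀ i j, Mm i j = Mm j i := by
    intro i j
    have hHbsym : Hb i j = Hb j i := by
      rw [hHb]
      exact intervalIntegral.integral_congr fun μ _ => GLBI_pderiv2_symm hℓ _ i j
    simp only [hMm, hHbsym]
    by_cases hbi : GLBI_bS S i = true <;> by_cases hbj : GLBI_bS S j = true <;>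
      simp [hbi, hbj]
  -- representation of the gradient
  have hGrep : ∀ i, G i = ∑ l, E l * Mm l i := by
    intro i
    by_cases hb : GLBI_bS S i = true
    · have hio : i = none ∨ ∃ j ∈ S, i = some j := by
        cases i with
        | none => exact Or.inl rfl
        | some j => exact Or.inr ⟨j, (hbSsome j).mp hb, rfl⟩
      have h0 : gradAt ℓ θo i = 0 := GLBI_oracle_grad_zero hℓ hθo i hio
      have hdiff := GLBI_grad_diff_eq hℓ θo (θ' k) i
      have hGi : G i = gradAt ℓ (θ' k) i := by
        cases i with
        | none => simp [hG]
        | some j => simp [hG, (hbSsome j).mp hb]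
      rw [hGi, show gradAt ℓ (θ' k) i = gradAt ℓ (θ' k) i - gradAt ℓ θo i by rw [h0]; ring,
        hdiff]
      refine Finset.sum_congr rfl fun l _ => ?_
      by_cases hbl : GLBI_bS S l = true
      · simp [hMm, hHb, hE, hbl, hb]
      · have hl0 : E l = 0 := by
          cases l with
          | none => exact absurd hbSnone hbl
          | some j => exact hEsupp j (by simpa [hbSsome] using hbl)
        have hl0' : θ' k l - θo l = 0 := by simpa [hE] using hl0
        rw [hl0', hl0]; ring
    · have hGi : G i = 0 := by
        cases i with
        | none => exact absurd hbSnone hb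
        | some j => exact hGsupp j (by simpa [hbSsome] using hb)
      rw [hGi]
      symm
      apply Finset.sum_eq_zero
      intro l _
      rw [hMm]
      simp [hb]
  have hIPQ : (∑ i, G i * E i) = ∑ i, ∑ j, E i * Mm i j * E j := by
    calc (∑ i, G i * E i) = ∑ i, (∑ l, E l * Mm l i) * E i :=
          Finset.sum_congr rfl fun i _ => by rw [hGrep i]
      _ = ∑ i, ∑ l, E l * Mm l i * E i :=
          Finset.sum_congr rfl fun i _ => Finset.sum_mul _ _ _
      _ = ∑ l, ∑ i, E l * Mm l i * E i := Finset.sum_comm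
      _ = ∑ i, ∑ j, E i * Mm i j * E j := rfl
  have htruncE : trunc E = E := by
    funext i
    simp only [htrunc]
    split_ifs with h
    · rfl
    · cases i with
      | none => exact absurd hbSnone h
      | some j => exact (hEsupp j (by simpa [hbSsome] using h)).symm
  have hIPge : lam * (∑ i, E i ^ 2) ≤ ∑ i, G i * E i := by
    rw [hIPQ, hQMH E, htruncE]
    exact (hQHb E hEsupp).1
  have hNRMle : (∑ i, G i ^ 2) ≤ Lam * (∑ i, G i * E i) := by
    rw [hIPQ]
    have hrow : ∀ i, G i = ∑ j, Mm i j * E j := by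
      intro i
      rw [hGrep i]
      exact Finset.sum_congr rfl fun l _ => by rw [hMsym l i]; ring
    calc (∑ i, G i ^ 2) = ∑ i, (∑ j, Mm i j * E j) ^ 2 :=
          Finset.sum_congr rfl fun i _ => by rw [hrow i]
      _ ≤ Lam * ∑ i, ∑ j, E i * Mm i j * E j := GLBI_coco Mm Lam hLam.le hMsym hpsd hub E
  -- sums over S form
  have hsum_supported : ∀ f : Option (Fin p) → ℝ, (∀ j, j ∉ S → f (some j) = 0) →
      (∑ i, f i) = f none + ∑ j ∈ S, f (some j) := by
    intro f hf
    rw [Fintype.sum_option]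
    congr 1
    exact (Finset.sum_subset S.subset_univ (fun j _ hj => hf j hj)).symm
  have hD2k : dOrc S θo θ' k ^ 2
      = (θ' k none - θo none) ^ 2 + ∑ j ∈ S, (θ' k (some j) - θo (some j)) ^ 2 := by
    rw [dOrc, Real.sq_sqrt (by positivity)]
  have hD2k1 : dOrc S θo θ' (k+1) ^ 2
      = (θ' (k+1) none - θo none) ^ 2 + ∑ j ∈ S, (θ' (k+1) (some j) - θo (some j)) ^ 2 := by
    rw [dOrc, Real.sq_sqrt (by positivity)]
  have hD2E : (∑ i, E i ^ 2) = dOrc S θo θ' k ^ 2 := by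
    rw [hD2k, hsum_supported (fun i => E i ^ 2) (fun j hj => by simp [hEsupp j hj])]
  have hIPS : (∑ i, G i * E i)
      = gradAt ℓ (θ' k) none * (θ' k none - θo none)
        + ∑ j ∈ S, gradAt ℓ (θ' k) (some j) * (κ * soft (z' k j) - θo (some j)) := by
    rw [hsum_supported (fun i => G i * E i) (fun j hj => by simp [hGsupp j hj])]
    have h2 : ∀ j ∈ S, (fun i => G i * E i) (some j)
        = gradAt ℓ (θ' k) (some j) * (κ * soft (z' k j) - θo (some j)) := by
      intro j hj
      have := hbrep k j hj
      simp [hG, hE, hj, this]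
    rw [Finset.sum_congr rfl h2]
  have hNRMS : (∑ i, G i ^ 2)
      = gradAt ℓ (θ' k) none ^ 2 + ∑ j ∈ S, gradAt ℓ (θ' k) (some j) ^ 2 := by
    rw [hsum_supported (fun i => G i ^ 2) (fun j hj => by simp [hGsupp j hj])]
    have h2 : ∀ j ∈ S, (fun i => G i ^ 2) (some j) = gradAt ℓ (θ' k) (some j) ^ 2 := by
      intro j hj; simp [hG, hj]
    rw [Finset.sum_congr rfl h2]
  -- the one-step estimate
  have hstep : PsiD S θo κ θ' z' (k + 1) - PsiD S θo κ θ' z' k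
      ≤ -(δ * (∑ i, G i * E i)) + (κ * δ ^ 2 / 2) * (∑ i, G i ^ 2) := by
    have hz1 : ∀ j ∈ S, z' (k+1) j = z' k j - δ * gradAt ℓ (θ' k) (some j) := hzit k
    have hb0 : (∑ j ∈ S, (θ' k (some j) - θo (some j)) ^ 2)
        = ∑ j ∈ S, (κ * soft (z' k j) - θo (some j)) ^ 2 :=
      Finset.sum_congr rfl fun j hj => by rw [hbrep k j hj]
    have hb1 : (∑ j ∈ S, (θ' (k+1) (some j) - θo (some j)) ^ 2)
        = ∑ j ∈ S, (κ * soft (z' (k+1) j) - θo (some j)) ^ 2 :=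
      Finset.sum_congr rfl fun j hj => by rw [hbrep (k+1) j hj]
    have e1 : PsiD S θo κ θ' z' (k + 1) - PsiD S θo κ θ' z' k
        = (∑ j ∈ S, (θo (some j) * (z' k j - soft (z' k j))
              - θo (some j) * (z' (k+1) j - soft (z' (k+1) j))
              + ((κ * soft (z' (k+1) j) - θo (some j)) ^ 2
                 - (κ * soft (z' k j) - θo (some j)) ^ 2) / (2*κ)))
          + ((θ' (k+1) none - θo none) ^ 2 - (θ' k none - θo none) ^ 2) / (2*κ) := by
      rw [PsiD, PsiD, hD2k, hD2k1, hb0, hb1]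
      simp only [sub_div, Finset.sum_add_distrib, Finset.sum_sub_distrib, ← Finset.sum_div]
      ring
    have e2 : ∀ j ∈ S,
        θo (some j) * (z' k j - soft (z' k j))
            - θo (some j) * (z' (k+1) j - soft (z' (k+1) j))
            + ((κ * soft (z' (k+1) j) - θo (some j)) ^ 2
               - (κ * soft (z' k j) - θo (some j)) ^ 2) / (2*κ)
          ≤ (-δ) * (gradAt ℓ (θ' k) (some j) * (κ * soft (z' k j) - θo (some j)))
            + (κ * δ ^ 2 / 2) * gradAt ℓ (θ' k) (some j) ^ 2 := fun j hj =>
      GLBI_stepj κ δ (θo (some j)) (gradAt ℓ (θ' k) (some j)) (z' k j) (z' (k+1) j)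
        hκpos (hz1 j hj)
    have e3 := GLBI_stepα κ δ (θo none) (gradAt ℓ (θ' k) none) (θ' k none) (θ' (k+1) none)
      hκpos (hαit k)
    rw [hIPS, hNRMS, e1]
    calc (∑ j ∈ S, (θo (some j) * (z' k j - soft (z' k j))
              - θo (some j) * (z' (k+1) j - soft (z' (k+1) j))
              + ((κ * soft (z' (k+1) j) - θo (some j)) ^ 2
                 - (κ * soft (z' k j) - θo (some j)) ^ 2) / (2*κ)))
          + ((θ' (k+1) none - θo none) ^ 2 - (θ' k none - θo none) ^ 2) / (2*κ)
        ≤ (∑ j ∈ S, ((-δ) * (gradAt ℓ (θ' k) (some j) * (κ * soft (z' k j) - θo (some j)))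
              + (κ * δ ^ 2 / 2) * gradAt ℓ (θ' k) (some j) ^ 2))
          + ((-δ) * (gradAt ℓ (θ' k) none * (θ' k none - θo none))
              + (κ * δ ^ 2 / 2) * gradAt ℓ (θ' k) none ^ 2) :=
          add_le_add (Finset.sum_le_sum e2) (le_of_eq e3)
      _ = -(δ * (gradAt ℓ (θ' k) none * (θ' k none - θo none)
              + ∑ j ∈ S, gradAt ℓ (θ' k) (some j) * (κ * soft (z' k j) - θo (some j))))
          + (κ * δ ^ 2 / 2) * (gradAt ℓ (θ' k) none ^ 2
              + ∑ j ∈ S, gradAt ℓ (θ' k) (some j) ^ 2) := by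
          simp only [Finset.sum_add_distrib, ← Finset.mul_sum]
          ring
  -- Ψ ≤ F(d²)
  have hPsiF : PsiD S θo κ θ' z' k ≤ Fpot κ (bomin θo) S.card (∑ i, E i ^ 2) := by
    set x := ∑ i, E i ^ 2 with hx
    set bo' := bomin θo with hbo'
    set term : Fin p → ℝ :=
      fun j => |θo (some j)| - θo (some j) * (z' k j - soft (z' k j)) with hterm
    set T := S.filter (fun j => term j ≠ 0) with hT
    have hTsub : T ⊆ S := Finset.filter_subset _ _
    have hxnn : (0:ℝ) ≤ x := Finset.sum_nonneg fun i _ => sq_nonneg _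
    have hterm_nonneg : ∀ j, 0 ≤ term j := by
      intro j
      have h1 : |θo (some j) * (z' k j - soft (z' k j))| ≤ |θo (some j)| := by
        rw [abs_mul]
        exact mul_le_of_le_one_right (abs_nonneg _) (GLBI_rho_abs_le _)
      have h2 := le_abs_self (θo (some j) * (z' k j - soft (z' k j)))
      rw [hterm]
      simp only
      linarith
    have hPsieq : PsiD S θo κ θ' z' k = (∑ j ∈ T, term j) + x / (2*κ) := by
      rw [PsiD, ← hD2E, ← Finset.sum_sub_distrib]
      congr 1
      refine (Finset.sum_subset hTsub fun j hjS hjT => ?_).symm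
      by_contra h
      exact hjT (Finset.mem_filter.mpr ⟨hjS, h⟩)
    have h0bo : 0 ≤ bo' := by
      rw [hbo', bomin]
      apply Real.sInf_nonneg
      rintro r ⟨j', _, rfl⟩
      exact abs_nonneg _
    have hkey : ∀ j ∈ T, bo' ^ 2 ≤ E (some j) ^ 2 ∧ term j ≤ 2 * |E (some j)| := by
      intro j hj
      obtain ⟨hjS, hne⟩ := Finset.mem_filter.mp hj
      obtain ⟨hbo_ne, hsq, hle⟩ := GLBI_term_bound κ (θo (some j)) (z' k j) hκpos hne
      have hEj : E (some j) = κ * soft (z' k j) - θo (some j) := by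
        simp [hE, hbrep k j hjS]
      have hboj : bo' ≤ |θo (some j)| := by
        rw [hbo', bomin]
        exact csInf_le ⟨0, by rintro r ⟨j', _, rfl⟩; exact abs_nonneg _⟩ ⟨j, hbo_ne, rfl⟩
      constructor
      · calc bo' ^ 2 ≤ |θo (some j)| ^ 2 := pow_le_pow_left₀ h0bo hboj 2
          _ = θo (some j) ^ 2 := sq_abs _
          _ ≤ E (some j) ^ 2 := by rw [hEj]; exact hsq
      · rw [hEj]; exact hle
    have hsum1 : (∑ j ∈ T, term j) ≤ 2 * ∑ j ∈ T, |E (some j)| := by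
      rw [Finset.mul_sum]
      exact Finset.sum_le_sum fun j hj => (hkey j hj).2
    have hcs : (∑ j ∈ T, |E (some j)|) ^ 2 ≤ T.card * ∑ j ∈ T, E (some j) ^ 2 := by
      have h := Finset.sum_mul_sq_le_sq_mul_sq T (fun _ => (1:ℝ)) (fun j => |E (some j)|)
      simpa [sq_abs] using h
    have hsTx : (∑ j ∈ T, E (some j) ^ 2) ≤ x := by
      calc ∑ j ∈ T, E (some j) ^ 2 ≤ ∑ j : Fin p, E (some j) ^ 2 :=
            Finset.sum_le_sum_of_subset_of_nonneg (Finset.subset_univ T)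
              (fun _ _ _ => sq_nonneg _)
        _ ≤ x := by
            rw [hx, Fintype.sum_option]
            nlinarith [sq_nonneg (E none)]
    have hsTnn : (0:ℝ) ≤ ∑ j ∈ T, E (some j) ^ 2 := Finset.sum_nonneg fun _ _ => sq_nonneg _
    have hcard_bo : (T.card : ℝ) * bo' ^ 2 ≤ x := by
      have h := Finset.card_nsmul_le_sum T (fun j => E (some j) ^ 2) (bo' ^ 2)
        (fun j hj => (hkey j hj).1)
      rw [nsmul_eq_mul] at h
      linarith
    have hTnn : (0:ℝ) ≤ (T.card : ℝ) := Nat.cast_nonneg _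
    have habs_nn : (0:ℝ) ≤ ∑ j ∈ T, |E (some j)| :=
      Finset.sum_nonneg fun _ _ => abs_nonneg _
    rw [hPsieq, Fpot]
    split_ifs with h1 h2
    · have hTempty : T = ∅ := by
        by_contra hne
        obtain ⟨j, hj⟩ := Finset.nonempty_iff_ne_empty.mpr hne
        have hk1 := (hkey j hj).1
        have hk2 : E (some j) ^ 2 ≤ ∑ j ∈ T, E (some j) ^ 2 :=
          Finset.single_le_sum (f := fun j => E (some j) ^ 2) (fun _ _ => sq_nonneg _) hj
        linarith
      rw [hTempty]
      simp only [Finset.sum_empty]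
      linarith
    · have hbo'pos : 0 < bo' := by
        rcases eq_or_lt_of_le h0bo with he | hp
        · exfalso
          rw [← he] at h2
          simp only [ne_eq, OfNat.ofNat_ne_zero, not_false_eq_true, zero_pow, mul_zero] at h2
          linarith
        · exact hp
      have hcard_le : (T.card : ℝ) ≤ x / bo' ^ 2 := by
        rw [le_div_iff₀ (by positivity)]
        exact hcard_bo
      have hsq2 : (∑ j ∈ T, |E (some j)|) ^ 2 ≤ (x / bo') ^ 2 := by
        calc (∑ j ∈ T, |E (some j)|) ^ 2 ≤ T.card * ∑ j ∈ T, E (some j) ^ 2 := hcs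
          _ ≤ (x / bo' ^ 2) * x := mul_le_mul hcard_le hsTx hsTnn (by positivity)
          _ = (x / bo') ^ 2 := by field_simp
      have hle2 : (∑ j ∈ T, |E (some j)|) ≤ x / bo' := by
        have hxb : (0:ℝ) ≤ x / bo' := by positivity
        have h := Real.sqrt_le_sqrt hsq2
        rwa [Real.sqrt_sq habs_nn, Real.sqrt_sq hxb] at h
      have h2x : 2 * x / bo' = 2 * (x / bo') := by ring
      linarith
    · have hcardS : (T.card : ℝ) ≤ (S.card : ℝ) := by
        exact_mod_cast Finset.card_le_card hTsub
      have hsq3 : (∑ j ∈ T, |E (some j)|) ^ 2 ≤ (S.card : ℝ) * x := by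
        calc (∑ j ∈ T, |E (some j)|) ^ 2 ≤ T.card * ∑ j ∈ T, E (some j) ^ 2 := hcs
          _ ≤ (S.card : ℝ) * x := mul_le_mul hcardS hsTx hsTnn (Nat.cast_nonneg _)
      have h3 : (∑ j ∈ T, |E (some j)|) ≤ Real.sqrt ((S.card : ℝ) * x) := by
        have h := Real.sqrt_le_sqrt hsq3
        rwa [Real.sqrt_sq habs_nn] at h
      linarith
  -- F⁻¹(Ψ) ≤ d²
  have hFinv : FpotInv κ (bomin θo) S.card (PsiD S θo κ θ' z' k) ≤ ∑ i, E i ^ 2 := by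
    apply csInf_le
    · exact ⟨0, fun y hy => hy.1⟩
    · exact ⟨Finset.sum_nonneg fun i _ => sq_nonneg _, hPsiF⟩
  -- final assembly
  have hIPnn : 0 ≤ ∑ i, G i * E i := by
    have : (0:ℝ) ≤ lam * ∑ i, E i ^ 2 :=
      mul_nonneg hlam.le (Finset.sum_nonneg fun i _ => sq_nonneg _)
    linarith
  calc PsiD S θo κ θ' z' (k + 1) - PsiD S θo κ θ' z' k
      ≤ -(δ * (∑ i, G i * E i)) + (κ * δ ^ 2 / 2) * (∑ i, G i ^ 2) := hstep
    _ ≤ -(δ * (∑ i, G i * E i)) + (κ * δ ^ 2 / 2) * (Lam * (∑ i, G i * E i)) := by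
        have : (0:ℝ) ≤ κ * δ ^ 2 / 2 := by positivity
        nlinarith [hNRMle]
    _ = -(δ * (1 - κ * δ * Lam / 2)) * (∑ i, G i * E i) := by ring
    _ ≤ -(δ * (1 - κ * δ * Lam / 2)) * (lam * (∑ i, E i ^ 2)) := by
        have h1 : 0 < δ * (1 - κ * δ * Lam / 2) := by positivity
        nlinarith [hIPge]
    _ ≤ -(δ * (lam * (1 - κ * δ * Lam / 2)) *
          FpotInv κ (bomin θo) S.card (PsiD S θo κ θ' z' k)) := by
        have h1 : 0 < δ * lam * (1 - κ * δ * Lam / 2) := by positivity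
        nlinarith [hFinv]
end

section
/- Generalized Bihari's inequality for the oracle dynamics of GLBISS: Under the continuous RSC assumption, for all t ≥ 0 the potential Ψ(t) satisfies dΨ(t)/dt ≤ −λ·F⁻¹(Ψ(t)). -/
open scoped BigOperators

/-- Pack an intercept `a` and a coefficient vector `b` into a parameter `θ`. -/
def pack {p : ℕ} (a : ℝ) (b : Fin p → ℝ) : Option (Fin p) → ℝ :=
  fun i => Option.elim i a b

/-- The GLBISS differential inclusion with parameter `κ`:
`α̇(t)/κ = −∇_α ℓ(θ(t))`, `ρ̇(t) + β̇(t)/κ = −∇_β ℓ(θ(t))`, `ρ(t) ∈ ∂‖β(t)‖₁`,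
with `ρ(0) = β(0) = 0`. -/
def GLBISSPath {p : ℕ} (ℓ : (Option (Fin p) → ℝ) → ℝ) (κ : ℝ)
    (a : ℝ → ℝ) (b ρf : ℝ → Fin p → ℝ) : Prop :=
  (∀ j, ρf 0 j = 0) ∧ (∀ j, b 0 j = 0) ∧
  (∀ t, 0 ≤ t → HasDerivAt a (-(κ * gradAt ℓ (pack (a t) (b t)) none)) t) ∧
  (∀ t, 0 ≤ t → ∀ j, HasDerivAt (fun u => ρf u j + b u j / κ)
      (-gradAt ℓ (pack (a t) (b t)) (some j)) t) ∧
  (∀ t, 0 ≤ t → ∀ j, (b t j ≠ 0 → ρf t j = Real.sign (b t j)) ∧ |ρf t j| ≤ 1)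

/-- The oracle dynamics of GLBISS: the same differential inclusion restricted to the
coordinates in `S`, with `ρ'_{Sᶜ}(t) = β'_{Sᶜ}(t) ≡ 0`. -/
def OracleDynC {p : ℕ} (ℓ : (Option (Fin p) → ℝ) → ℝ) (S : Finset (Fin p)) (κ : ℝ)
    (a : ℝ → ℝ) (b ρf : ℝ → Fin p → ℝ) : Prop :=
  (∀ j, ρf 0 j = 0) ∧ (∀ j, b 0 j = 0) ∧
  (∀ t j, j ∉ S → ρf t j = 0 ∧ b t j = 0) ∧
  (∀ t, 0 ≤ t → HasDerivAt a (-(κ * gradAt ℓ (pack (a t) (b t)) none)) t) ∧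
  (∀ t, 0 ≤ t → ∀ j ∈ S, HasDerivAt (fun u => ρf u j + b u j / κ)
      (-gradAt ℓ (pack (a t) (b t)) (some j)) t) ∧
  (∀ t, 0 ≤ t → ∀ j ∈ S, (b t j ≠ 0 → ρf t j = Real.sign (b t j)) ∧ |ρf t j| ≤ 1)

/-- Continuous restricted strong convexity: `λ I ⪯ ∇²_{S_α,S_α} ℓ(θ) ⪯ Λ I` on the
segments between `θ'(t)` and `θᵒ` for any `t ≥ 0`, and between `θ⋆` and `θᵒ`. -/
def RSCcondC {p : ℕ} (ℓ : (Option (Fin p) → ℝ) → ℝ) (S : Finset (Fin p))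
    (θstar θo : Option (Fin p) → ℝ) (a : ℝ → ℝ) (b : ℝ → Fin p → ℝ) (lam Lam : ℝ) : Prop :=
  ∀ θ : Option (Fin p) → ℝ,
    ((∃ t : ℝ, 0 ≤ t ∧ ∃ μ ∈ Set.Icc (0:ℝ) 1, θ = segPt (pack (a t) (b t)) θo μ) ∨
      (∃ μ ∈ Set.Icc (0:ℝ) 1, θ = segPt θstar θo μ)) →
    ∀ v : Option (Fin p) → ℝ, (∀ j, j ∉ S → v (some j) = 0) →
      lam * ∑ i, v i ^ 2 ≤ ∑ i, ∑ i', v i * pderiv2 ℓ θ i i' * v i' ∧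
      ∑ i, ∑ i', v i * pderiv2 ℓ θ i i' * v i' ≤ Lam * ∑ i, v i ^ 2

/-- Continuous irrepresentable condition:
`sup_{T ≥ 0} ‖∫₀ᵀ irr̄(t)·(α̇'(t)/κ, ż'_S(t)) dt‖_∞ < 1 − η/2` (where, along the oracle
dynamics, `(α̇'(t)/κ, ż'_S(t)) = −∇_{S_α}ℓ(θ'(t))`) and `sup_{t ≥ 0} ‖irr̄(t)‖_∞ ≤ C`. -/
def IRRcondC {p : ℕ} (ℓ : (Option (Fin p) → ℝ) → ℝ) (θstar : Option (Fin p) → ℝ)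
    (S : Finset (Fin p)) (a : ℝ → ℝ) (b : ℝ → Fin p → ℝ) (η C : ℝ) : Prop :=
  (∃ bd, bd < 1 - η / 2 ∧ ∀ T : ℝ, 0 ≤ T → ∀ jc : {j : Fin p // j ∉ S},
      |∫ t in (0:ℝ)..T,
        ((irrMat ℓ θstar S (pack (a t) (b t))).mulVec
          (fun i => -gradAt ℓ (pack (a t) (b t)) (Option.map Subtype.val i))) jc| ≤ bd) ∧
  (∀ t : ℝ, 0 ≤ t → ∀ jc : {j : Fin p // j ∉ S},
      ∑ i : Option {j : Fin p // j ∈ S}, |irrMat ℓ θstar S (pack (a t) (b t)) jc i| ≤ C)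

/-- `d(t) = ‖(α'(t), β'_S(t)) − (αᵒ, βᵒ_S)‖₂`. -/
noncomputable def dOrcC {p : ℕ} (S : Finset (Fin p)) (θo : Option (Fin p) → ℝ)
    (a : ℝ → ℝ) (b : ℝ → Fin p → ℝ) (t : ℝ) : ℝ :=
  Real.sqrt ((a t - θo none) ^ 2 + ∑ j ∈ S, (b t j - θo (some j)) ^ 2)

/-- Auxiliary: chain rule for a partial derivative of a `C²` function along a
differentiable curve. -/
lemma hasDerivAt_gradAt {p : ℕ} {ℓ : (Option (Fin p) → ℝ) → ℝ} (hℓ : ContDiff ℝ 2 ℓ)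
    {c : ℝ → Option (Fin p) → ℝ} {cd : Option (Fin p) → ℝ} {μ : ℝ}
    (hc : HasDerivAt c cd μ) (i' : Option (Fin p)) :
    HasDerivAt (fun u => gradAt ℓ (c u) i') (∑ i, cd i * pderiv2 ℓ (c μ) i i') μ := by
  have hfd : ContDiff ℝ 1 (fderiv ℝ ℓ) := hℓ.fderiv_right (le_refl 2)
  have hG : Differentiable ℝ (fun x => gradAt ℓ x i') := by
    have h1 : (fun x => gradAt ℓ x i') =
        (fun L : (Option (Fin p) → ℝ) →L[ℝ] ℝ => L (Pi.single i' 1)) ∘ (fderiv ℝ ℓ) := rfl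
    rw [h1]
    exact (by fun_prop : Differentiable ℝ fun L : (Option (Fin p) → ℝ) →L[ℝ] ℝ => L (Pi.single i' 1)).comp
      (hfd.differentiable one_ne_zero)
  have hGd := (hG (c μ)).hasFDerivAt
  have hcomp := hGd.comp_hasDerivAt μ hc
  refine hcomp.congr_deriv (Eq.symm ?_)
  have hsingle : ∀ (i : Option (Fin p)) (r : ℝ), (Pi.single i r : Option (Fin p) → ℝ)
      = r • (Pi.single i (1:ℝ) : Option (Fin p) → ℝ) := by
    intro i r; funext k
    by_cases h : k = i
    · subst h; simp
    · simp [Pi.single_eq_of_ne h]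
  conv_rhs => rw [← Finset.univ_sum_single cd, map_sum]
  refine Finset.sum_congr rfl fun i _ => ?_
  rw [hsingle i (cd i), (fderiv ℝ (fun x => gradAt ℓ x i') (c μ)).map_smul]
  rfl

set_option maxHeartbeats 2000000 in
/-- **Generalized Bihari's inequality for the oracle dynamics of GLBISS.**
Under the continuous RSC, the potential
`Ψ(t) = ‖βᵒ_S‖₁ − ⟨βᵒ_S, ρ'_S(t)⟩ + d(t)²/(2κ)` satisfies
`dΨ(t)/dt ≤ −λ·F⁻¹(Ψ(t))` for all `t ≥ 0`. -/
theorem glbiss_bihari {p : ℕ}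
    (ℓ : (Option (Fin p) → ℝ) → ℝ) (hℓ : ContDiff ℝ 2 ℓ)
    (θstar : Option (Fin p) → ℝ) (S : Finset (Fin p))
    (hS : ∀ j, j ∈ S ↔ θstar (some j) ≠ 0)
    (θo : Option (Fin p) → ℝ) (hθo : OracleEst ℓ S θo)
    (κ : ℝ) (hκpos : 0 < κ)
    -- the oracle dynamics, with its (coordinatewise) derivatives
    (a' : ℝ → ℝ) (b' ρ' : ℝ → Fin p → ℝ)
    (ad : ℝ → ℝ) (bd ρd : ℝ → Fin p → ℝ)
    (hρ0 : ∀ j, ρ' 0 j = 0) (hb0 : ∀ j, b' 0 j = 0)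
    (hsupp : ∀ t j, j ∉ S → ρ' t j = 0 ∧ b' t j = 0)
    (ha_deriv : ∀ t : ℝ, 0 ≤ t → HasDerivAt a' (ad t) t)
    (hb_deriv : ∀ t : ℝ, 0 ≤ t → ∀ j ∈ S, HasDerivAt (fun u => b' u j) (bd t j) t)
    (hρ_deriv : ∀ t : ℝ, 0 ≤ t → ∀ j ∈ S, HasDerivAt (fun u => ρ' u j) (ρd t j) t)
    (hODEα : ∀ t : ℝ, 0 ≤ t →
      ad t / κ = -gradAt ℓ (pack (a' t) (b' t)) none)
    (hODEβ : ∀ t : ℝ, 0 ≤ t → ∀ j ∈ S,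
      ρd t j + bd t j / κ = -gradAt ℓ (pack (a' t) (b' t)) (some j))
    (hsub : ∀ t : ℝ, 0 ≤ t → ∀ j ∈ S,
      (b' t j ≠ 0 → ρ' t j = Real.sign (b' t j)) ∧ |ρ' t j| ≤ 1)
    (lam Lam : ℝ) (hlam : 0 < lam) (hLam : 0 < Lam)
    (hRSC : RSCcondC ℓ S θstar θo a' b' lam Lam) :
    ∀ t : ℝ, 0 ≤ t → ∀ D : ℝ,
      HasDerivAt (fun u => (∑ j ∈ S, |θo (some j)|) -
          (∑ j ∈ S, θo (some j) * ρ' u j) + (dOrcC S θo a' b' u) ^ 2 / (2 * κ)) D t →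
      D ≤ -(lam * FpotInv κ (bomin θo) S.card
          ((∑ j ∈ S, |θo (some j)|) - (∑ j ∈ S, θo (some j) * ρ' t j) +
            (dOrcC S θo a' b' t) ^ 2 / (2 * κ))) := by
  classical
  intro t ht D hD
  have hκ : (κ:ℝ) ≠ 0 := ne_of_gt hκpos
  have hθoS : ∀ j, j ∉ S → θo (some j) = 0 := hθo.1
  have hE : ∀ u, dOrcC S θo a' b' u ^ 2
      = (a' u - θo none) ^ 2 + ∑ j ∈ S, (b' u j - θo (some j)) ^ 2 := by
    intro u
    exact Real.sq_sqrt (by positivity)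
  set x : ℝ := dOrcC S θo a' b' t ^ 2 with hxdef
  have hx0 : (0:ℝ) ≤ x := hxdef ▸ sq_nonneg _
  have hxE : x = (a' t - θo none) ^ 2 + ∑ j ∈ S, (b' t j - θo (some j)) ^ 2 := hE t
  -- identify D via derivative uniqueness
  have hA2 : HasDerivAt (fun u => (a' u - θo none) ^ 2) (2 * (a' t - θo none) * ad t) t := by
    have h := ((ha_deriv t ht).sub_const (θo none)).fun_pow 2
    refine h.congr_deriv ?_
    push_cast
    ring
  have hB2 : HasDerivAt (fun u => ∑ j ∈ S, (b' u j - θo (some j)) ^ 2)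
      (∑ j ∈ S, 2 * (b' t j - θo (some j)) * bd t j) t := by
    refine HasDerivAt.fun_sum fun j hj => ?_
    have h := ((hb_deriv t ht j hj).sub_const (θo (some j))).fun_pow 2
    refine h.congr_deriv ?_
    push_cast
    ring
  have hC2 : HasDerivAt (fun u => ∑ j ∈ S, θo (some j) * ρ' u j)
      (∑ j ∈ S, θo (some j) * ρd t j) t :=
    HasDerivAt.fun_sum fun j hj => (hρ_deriv t ht j hj).const_mul _
  have hP1 : HasDerivAt (fun u => (∑ j ∈ S, |θo (some j)|) -
      (∑ j ∈ S, θo (some j) * ρ' u j) + ((a' u - θo none) ^ 2 +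
        ∑ j ∈ S, (b' u j - θo (some j)) ^ 2) / (2 * κ))
      (-(∑ j ∈ S, θo (some j) * ρd t j) +
        (2 * (a' t - θo none) * ad t + ∑ j ∈ S, 2 * (b' t j - θo (some j)) * bd t j)
          / (2 * κ)) t :=
    (hC2.const_sub _).add ((hA2.add hB2).div_const _)
  have hfeq : (fun u => (∑ j ∈ S, |θo (some j)|) - (∑ j ∈ S, θo (some j) * ρ' u j) +
      dOrcC S θo a' b' u ^ 2 / (2 * κ)) = (fun u => (∑ j ∈ S, |θo (some j)|) -
      (∑ j ∈ S, θo (some j) * ρ' u j) + ((a' u - θo none) ^ 2 +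
        ∑ j ∈ S, (b' u j - θo (some j)) ^ 2) / (2 * κ)) := by
    funext u
    rw [hE u]
  rw [hfeq] at hD
  have hDval : D = -(∑ j ∈ S, θo (some j) * ρd t j) +
      (2 * (a' t - θo none) * ad t + ∑ j ∈ S, 2 * (b' t j - θo (some j)) * bd t j)
        / (2 * κ) :=
    hD.unique hP1
  -- the term b' * ρd vanishes
  have hbρ : ∀ j ∈ S, b' t j * ρd t j = 0 := by
    intro j hj
    rcases eq_or_lt_of_le ht with h0 | htpos
    · rw [← h0, hb0 j, zero_mul]
    by_cases hbz : b' t j = 0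
    · rw [hbz, zero_mul]
    have hsign := (hsub t ht j hj).1 hbz
    have hnbhd : Set.Ioo (t/2) (t+1) ∈ nhds t := Ioo_mem_nhds (by linarith) (by linarith)
    rcases lt_or_gt_of_ne hbz with hneg | hpos
    · have hρt : ρ' t j = -1 := by rw [hsign, Real.sign_of_neg hneg]
      have hmin : IsLocalMin (fun u => ρ' u j) t := by
        filter_upwards [hnbhd] with u hu
        have hu0 : (0:ℝ) ≤ u := by linarith [hu.1]
        have h1 := (hsub u hu0 j hj).2
        show ρ' t j ≤ ρ' u j
        rw [hρt]
        linarith [(abs_le.mp h1).1]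
      rw [hmin.hasDerivAt_eq_zero (hρ_deriv t ht j hj), mul_zero]
    · have hρt : ρ' t j = 1 := by rw [hsign, Real.sign_of_pos hpos]
      have hmax : IsLocalMax (fun u => ρ' u j) t := by
        filter_upwards [hnbhd] with u hu
        have hu0 : (0:ℝ) ≤ u := by linarith [hu.1]
        have h1 := (hsub u hu0 j hj).2
        show ρ' u j ≤ ρ' t j
        rw [hρt]
        linarith [(abs_le.mp h1).2]
      rw [hmax.hasDerivAt_eq_zero (hρ_deriv t ht j hj), mul_zero]
  have hsum0 : ∑ j ∈ S, b' t j * ρd t j = 0 := Finset.sum_eq_zero hbρ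
  -- the direction v
  set θt : Option (Fin p) → ℝ := pack (a' t) (b' t) with hθt
  set v : Option (Fin p) → ℝ := fun i => θt i - θo i with hvdef
  have hvnone : v none = a' t - θo none := rfl
  have hvsome : ∀ j, v (some j) = b' t j - θo (some j) := fun j => rfl
  have hvs : ∀ j, j ∉ S → v (some j) = 0 := by
    intro j hj
    rw [hvsome, (hsupp t j hj).2, hθoS j hj, sub_zero]
  have hxv : ∑ i, v i ^ 2 = x := by
    rw [hxE, Fintype.sum_option]
    congr 1
    rw [← Finset.sum_subset (Finset.subset_univ S)
      (fun j _ hj => by rw [hvs j hj]; ring)]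
    exact Finset.sum_congr rfl fun j _ => by rw [hvsome]
  -- gradient of ℓ vanishes at θo in the feasible directions
  have horacle : ∀ i : Option (Fin p), (∀ j, i = some j → j ∈ S) → gradAt ℓ θo i = 0 := by
    intro i hi
    set w : Option (Fin p) → ℝ := Pi.single i 1 with hw
    have hline : HasDerivAt (fun c : ℝ => θo + c • w) w 0 := by
      simpa using ((hasDerivAt_id (0:ℝ)).smul_const w).const_add θo
    have hf0 : θo + (0:ℝ) • w = θo := by simp
    have hld := (hℓ.differentiable (by norm_num)).differentiableAt.hasFDerivAt (x := θo)
    have hld' : HasFDerivAt ℓ (fderiv ℝ ℓ θo) (θo + (0:ℝ) • w) := hf0.symm ▸ hld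
    have hcomp : HasDerivAt (fun c : ℝ => ℓ (θo + c • w)) (fderiv ℝ ℓ θo w) 0 :=
      hld'.comp_hasDerivAt 0 hline
    have hmin : IsLocalMin (fun c : ℝ => ℓ (θo + c • w)) 0 := by
      refine Filter.Eventually.of_forall fun c => ?_
      show ℓ (θo + (0:ℝ) • w) ≤ ℓ (θo + c • w)
      rw [hf0]
      refine hθo.2 _ fun j hj => ?_
      have hij : some j ≠ i := fun h => hj (hi j h.symm)
      show θo (some j) + c • w (some j) = 0
      rw [hθoS j hj, hw]
      simp [Pi.single_eq_of_ne hij]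
    show fderiv ℝ ℓ θo (Pi.single i 1) = 0
    rw [← hw]
    exact hmin.hasDerivAt_eq_zero hcomp
  -- mean value theorem along the segment
  set g : ℝ → ℝ := fun μ => ∑ i, v i * gradAt ℓ (θo + μ • v) i with hg
  have hlinev : ∀ μ : ℝ, HasDerivAt (fun u : ℝ => θo + u • v) v μ := fun μ => by
    simpa using ((hasDerivAt_id μ).smul_const v).const_add θo
  have hgd : ∀ μ : ℝ, HasDerivAt g
      (∑ i', v i' * ∑ i, v i * pderiv2 ℓ (θo + μ • v) i i') μ := by
    intro μ
    exact HasDerivAt.fun_sum fun i' _ => (hasDerivAt_gradAt hℓ (hlinev μ) i').const_mul (v i')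
  obtain ⟨c, hc, hceq⟩ := exists_hasDerivAt_eq_slope g
      (fun μ => ∑ i', v i' * ∑ i, v i * pderiv2 ℓ (θo + μ • v) i i') one_pos
      (fun μ _ => (hgd μ).continuousAt.continuousWithinAt)
      (fun μ _ => hgd μ)
  rw [sub_zero, div_one] at hceq
  -- RSC at the intermediate point
  have hmem : (θo + c • v) = segPt (pack (a' t) (b' t)) θo (1 - c) := by
    funext l
    show θo l + c * v l = _
    rw [hvdef]
    show θo l + c * (θt l - θo l) = θt l + (1 - c) * (θo l - θt l)
    ring
  have hRSCc := (hRSC (θo + c • v)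
      (Or.inl ⟨t, ht, 1 - c, Set.mem_Icc.mpr ⟨by linarith [hc.2], by linarith [hc.1]⟩,
        hθt ▸ hmem⟩) v hvs).1
  have hQeq : (∑ i', v i' * ∑ i, v i * pderiv2 ℓ (θo + c • v) i i')
      = ∑ i, ∑ i', v i * pderiv2 ℓ (θo + c • v) i i' * v i' := by
    calc (∑ i', v i' * ∑ i, v i * pderiv2 ℓ (θo + c • v) i i')
        = ∑ i', ∑ i, v i * pderiv2 ℓ (θo + c • v) i i' * v i' := by
          refine Finset.sum_congr rfl fun i' _ => ?_
          rw [Finset.mul_sum]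
          exact Finset.sum_congr rfl fun i _ => by ring
      _ = ∑ i, ∑ i', v i * pderiv2 ℓ (θo + c • v) i i' * v i' := Finset.sum_comm
  have hkey : lam * x ≤ g 1 - g 0 := by
    calc lam * x = lam * ∑ i, v i ^ 2 := by rw [hxv]
      _ ≤ ∑ i, ∑ i', v i * pderiv2 ℓ (θo + c • v) i i' * v i' := hRSCc
      _ = g 1 - g 0 := by rw [← hQeq, hceq]
  -- endpoints of g
  have hg0 : g 0 = 0 := by
    have h0v : θo + (0:ℝ) • v = θo := by simp
    show (∑ i, v i * gradAt ℓ (θo + (0:ℝ) • v) i) = 0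
    rw [h0v]
    refine Finset.sum_eq_zero fun i _ => ?_
    rcases i with _ | j
    · rw [horacle none (fun j h => by cases h), mul_zero]
    · by_cases hj : j ∈ S
      · rw [horacle (some j) (fun j' h => by injection h with h'; exact h' ▸ hj), mul_zero]
      · rw [hvs j hj, zero_mul]
  have h1v : θo + (1:ℝ) • v = θt := by
    funext l
    show θo l + 1 * v l
        = θt l
    rw [hvdef]
    show θo l + 1 * (θt l - θo l) = θt l
    ring
  have hgradnone : gradAt ℓ θt none = -(ad t / κ) := by
    have h := hODEα t ht
    rw [hθt]
    linarith
  have hgradsome : ∀ j ∈ S, gradAt ℓ θt (some j) = -(ρd t j + bd t j / κ) := by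
    intro j hj
    have h := hODEβ t ht j hj
    rw [hθt]
    linarith
  have hg1 : g 1 = -((a' t - θo none) * (ad t / κ))
      - ∑ j ∈ S, (b' t j - θo (some j)) * (ρd t j + bd t j / κ) := by
    show (∑ i, v i * gradAt ℓ (θo + (1:ℝ) • v) i) = _
    rw [h1v, Fintype.sum_option, hvnone, hgradnone]
    have hrestrict : ∑ j : Fin p, v (some j) * gradAt ℓ θt (some j)
        = ∑ j ∈ S, -((b' t j - θo (some j)) * (ρd t j + bd t j / κ)) := by
      rw [← Finset.sum_subset (Finset.subset_univ S)
        (fun j _ hj => by rw [hvs j hj, zero_mul])]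
      refine Finset.sum_congr rfl fun j hj => ?_
      rw [hvsome, hgradsome j hj]
      ring
    rw [hrestrict, Finset.sum_neg_distrib]
    ring
  have hDg : D = -(g 1) := by
    rw [hDval, hg1]
    have hsplit : ∑ j ∈ S, (b' t j - θo (some j)) * (ρd t j + bd t j / κ)
        = ((∑ j ∈ S, b' t j * ρd t j) - (∑ j ∈ S, θo (some j) * ρd t j))
          + (∑ j ∈ S, 2 * (b' t j - θo (some j)) * bd t j) / (2 * κ) := by
      rw [Finset.sum_div, ← Finset.sum_sub_distrib, ← Finset.sum_add_distrib]
      refine Finset.sum_congr rfl fun j hj => ?_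
      field_simp
    rw [hsplit, hsum0]
    field_simp
    ring
  have hDle : D ≤ -(lam * x) := by
    rw [hDg]
    linarith [hkey, hg0]
  -- the combinatorial bound Ψ(t) ≤ F(d(t)²)
  set A : ℝ := ∑ j ∈ S, (|θo (some j)| - θo (some j) * ρ' t j) with hAdef
  have hΨA : (∑ j ∈ S, |θo (some j)|) - (∑ j ∈ S, θo (some j) * ρ' t j) = A := by
    rw [hAdef, Finset.sum_sub_distrib]
  set bo : ℝ := bomin θo with hbodef
  have hbo0 : 0 ≤ bo := by
    rw [hbodef]
    exact Real.sInf_nonneg (by rintro r ⟨j, _, rfl⟩; positivity)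
  have hboB : BddBelow {r : ℝ | ∃ j : Fin p, θo (some j) ≠ 0 ∧ r = |θo (some j)|} :=
    ⟨0, by rintro r ⟨j, _, rfl⟩; positivity⟩
  have hbole : ∀ j : Fin p, θo (some j) ≠ 0 → bo ≤ |θo (some j)| := fun j hj => by
    rw [hbodef]
    exact csInf_le hboB ⟨j, hj, rfl⟩
  have hterm2 : ∀ j ∈ S, |θo (some j)| - θo (some j) * ρ' t j ≤ 2 * |θo (some j)| := by
    intro j hj
    have h1 := (hsub t ht j hj).2
    have h3 : |θo (some j) * ρ' t j| ≤ |θo (some j)| := by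
      rw [abs_mul]
      nlinarith [abs_nonneg (θo (some j))]
    have h2 : -|θo (some j)| ≤ θo (some j) * ρ' t j :=
      le_trans (neg_le_neg h3) (neg_abs_le _)
    linarith
  have hkey2 : ∀ j ∈ S, (|θo (some j)| - θo (some j) * ρ' t j ≠ 0) →
      θo (some j) ≠ 0 ∧ |θo (some j)| ≤ |b' t j - θo (some j)| := by
    intro j hj hne
    have hθne : θo (some j) ≠ 0 := by
      intro h0
      apply hne
      rw [h0]
      simp
    refine ⟨hθne, ?_⟩
    by_contra hlt
    push_neg at hlt
    have hbne : b' t j ≠ 0 := by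
      intro h0
      rw [h0, zero_sub, abs_neg] at hlt
      exact lt_irrefl _ hlt
    have hsign := (hsub t ht j hj).1 hbne
    rcases lt_trichotomy (θo (some j)) 0 with hneg | h0 | hpos
    · have habs : |θo (some j)| = -θo (some j) := abs_of_neg hneg
      rw [habs] at hlt
      have hb : b' t j < 0 := by
        have := (abs_lt.mp hlt).2
        linarith
      apply hne
      rw [hsign, Real.sign_of_neg hb, abs_of_neg hneg]
      ring
    · exact absurd h0 hθne
    · have habs : |θo (some j)| = θo (some j) := abs_of_pos hpos
      rw [habs] at hlt
      have hb : 0 < b' t j := by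
        have := (abs_lt.mp hlt).1
        linarith
      apply hne
      rw [hsign, Real.sign_of_pos hb, abs_of_pos hpos]
      ring
  set B : Finset (Fin p) := S.filter (fun j => |θo (some j)| - θo (some j) * ρ' t j ≠ 0)
    with hBdef
  have hAB : A = ∑ j ∈ B, (|θo (some j)| - θo (some j) * ρ' t j) := by
    rw [hAdef, hBdef]
    exact (Finset.sum_filter_ne_zero S).symm
  have hBS : B ⊆ S := hBdef ▸ Finset.filter_subset _ _
  have hw2x : ∑ j ∈ B, (b' t j - θo (some j)) ^ 2 ≤ x := by
    rw [hxE]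
    have h1 : ∑ j ∈ B, (b' t j - θo (some j)) ^ 2 ≤ ∑ j ∈ S, (b' t j - θo (some j)) ^ 2 :=
      Finset.sum_le_sum_of_subset_of_nonneg hBS (fun j _ _ => sq_nonneg _)
    linarith [h1, sq_nonneg (a' t - θo none)]
  have hmemB : ∀ j ∈ B, j ∈ S ∧ |θo (some j)| - θo (some j) * ρ' t j ≠ 0 := by
    intro j hj
    rw [hBdef] at hj
    exact Finset.mem_filter.mp hj
  have hbow : ∀ j ∈ B, bo ≤ |b' t j - θo (some j)| := by
    intro j hj
    obtain ⟨hjS, hne⟩ := hmemB j hj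
    obtain ⟨hθne, hle⟩ := hkey2 j hjS hne
    exact le_trans (hbole j hθne) hle
  have hA2w : A ≤ 2 * ∑ j ∈ B, |b' t j - θo (some j)| := by
    rw [hAB, Finset.mul_sum]
    refine Finset.sum_le_sum fun j hj => ?_
    obtain ⟨hjS, hne⟩ := hmemB j hj
    obtain ⟨hθne, hle⟩ := hkey2 j hjS hne
    calc |θo (some j)| - θo (some j) * ρ' t j ≤ 2 * |θo (some j)| := hterm2 j hjS
      _ ≤ 2 * |b' t j - θo (some j)| := by linarith
  have hw2single : ∀ j ∈ B, (b' t j - θo (some j)) ^ 2 ≤ x := fun j hj =>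
    le_trans (Finset.single_le_sum (fun j _ => sq_nonneg (b' t j - θo (some j))) hj) hw2x
  have hsumw_nonneg : 0 ≤ ∑ j ∈ B, |b' t j - θo (some j)| :=
    Finset.sum_nonneg fun j _ => abs_nonneg _
  have hAG : A ≤ (if x < bo ^ 2 then 0 else if x < S.card * bo ^ 2 then 2 * x / bo
      else 2 * Real.sqrt (S.card * x)) := by
    split_ifs with h1 h2
    · have hBempty : B = ∅ := by
        by_contra hne
        obtain ⟨j, hj⟩ := Finset.nonempty_iff_ne_empty.mpr hne
        have h3 := hw2single j hj
        have h4 := hbow j hj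
        nlinarith [abs_nonneg (b' t j - θo (some j)), sq_abs (b' t j - θo (some j))]
      rw [hAB, hBempty, Finset.sum_empty]
    · push_neg at h1
      have hbpos : 0 < bo := by
        rcases eq_or_lt_of_le hbo0 with h0 | h
        · exfalso
          rw [← h0] at h2
          simp at h2
          linarith
        · exact h
      have hsum_le : ∑ j ∈ B, |b' t j - θo (some j)| ≤ x / bo := by
        rw [le_div_iff₀ hbpos, Finset.sum_mul]
        calc ∑ j ∈ B, |b' t j - θo (some j)| * bo
            ≤ ∑ j ∈ B, (b' t j - θo (some j)) ^ 2 := by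
              refine Finset.sum_le_sum fun j hj => ?_
              have h5 := hbow j hj
              nlinarith [abs_nonneg (b' t j - θo (some j)), sq_abs (b' t j - θo (some j))]
          _ ≤ x := hw2x
      calc A ≤ 2 * ∑ j ∈ B, |b' t j - θo (some j)| := hA2w
        _ ≤ 2 * (x / bo) := by linarith
        _ = 2 * x / bo := by ring
    · push_neg at h1 h2
      have hcards : (B.card : ℝ) ≤ (S.card : ℝ) := by
        exact_mod_cast Finset.card_le_card hBS
      have hsq : (∑ j ∈ B, |b' t j - θo (some j)|) ^ 2 ≤ (S.card : ℝ) * x := by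
        have hcs := Finset.sum_mul_sq_le_sq_mul_sq B (fun _ => (1:ℝ))
          (fun j => |b' t j - θo (some j)|)
        simp only [one_mul, one_pow] at hcs
        have h5 : ∑ j ∈ B, |b' t j - θo (some j)| ^ 2
            = ∑ j ∈ B, (b' t j - θo (some j)) ^ 2 :=
          Finset.sum_congr rfl fun j _ => sq_abs _
        have h6 : (∑ _j ∈ B, (1:ℝ)) = (B.card : ℝ) := by simp
        have hs2 : 0 ≤ ∑ j ∈ B, (b' t j - θo (some j)) ^ 2 :=
          Finset.sum_nonneg fun j _ => sq_nonneg _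
        calc (∑ j ∈ B, |b' t j - θo (some j)|) ^ 2
            ≤ (B.card : ℝ) * ∑ j ∈ B, (b' t j - θo (some j)) ^ 2 := by
              rw [← h5, ← h6]
              exact hcs
          _ ≤ (S.card : ℝ) * x := by nlinarith [hw2x]
      have hle : ∑ j ∈ B, |b' t j - θo (some j)| ≤ Real.sqrt ((S.card : ℝ) * x) := by
        calc ∑ j ∈ B, |b' t j - θo (some j)|
            = Real.sqrt ((∑ j ∈ B, |b' t j - θo (some j)|) ^ 2) :=
              (Real.sqrt_sq hsumw_nonneg).symm
          _ ≤ Real.sqrt ((S.card : ℝ) * x) := Real.sqrt_le_sqrt hsq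
      linarith [hA2w]
  have hPsiF : (∑ j ∈ S, |θo (some j)|) - (∑ j ∈ S, θo (some j) * ρ' t j) + x / (2 * κ)
      ≤ Fpot κ bo S.card x := by
    rw [hΨA]
    show A + x / (2 * κ) ≤ x / (2 * κ) +
      (if x < bo ^ 2 then 0 else if x < S.card * bo ^ 2 then 2 * x / bo
        else 2 * Real.sqrt (S.card * x))
    linarith [hAG]
  have hInv : FpotInv κ bo S.card ((∑ j ∈ S, |θo (some j)|) -
      (∑ j ∈ S, θo (some j) * ρ' t j) + x / (2 * κ)) ≤ x :=
    csInf_le ⟨0, fun y hy => hy.1⟩ ⟨hx0, hPsiF⟩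
  have hmul := mul_le_mul_of_nonneg_left hInv hlam.le
  linarith [hDle, hmul]
end

section
/- Uniform law of large numbers over a ball: Let x⁽¹⁾, …, x⁽ⁿ⁾ be i.i.d. copies of X on (Ω, 𝓕, ℙ), let Ξ = {ξ ∈ ℝ^d : ‖ξ − ξ₀‖₂ ≤ C} for some C > 0 and ξ₀ ∈ ℝ^d, and let h : Ξ × Ω → ℝ satisfy |h(ξ; X) − h(ξ'; X)| ≤ M(X)‖ξ − ξ'‖₂ for all ξ, ξ' ∈ Ξ, where V_M := E[M(X)²] < +∞. Suppose, with E_h(ξ) := E[h(ξ; X)], there exist σ > 0 and 0 < t₀ ≤ +∞ such that E[exp(t(h(ξ; X) − E_h(ξ)))] ≤ exp(σ²t²/2) for all ξ ∈ Ξ and |t| < t₀. Then for any ε > 0 and 0 < δ ≤ 1, P( sup_{ξ∈Ξ} |(1/n)Σ_{i=1}^n h(ξ; x⁽ⁱ⁾) − E_h(ξ)| ≥ ε ) ≤ δ/2 + 2 exp( d·log(1 + 16C√(V_M)√d/(εδ)) − nε²/(8(σ² + ε/t₀)) ). -/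
open scoped BigOperators ENNReal
open MeasureTheory ProbabilityTheory Metric

lemma card_le_of_separated (d : ℕ) (ξ₀ : EuclideanSpace ℝ (Fin d)) (C r : ℝ)
    (hC : 0 < C) (hr : 0 < r) (S : Finset (EuclideanSpace ℝ (Fin d)))
    (hS : ∀ s ∈ S, s ∈ closedBall ξ₀ C)
    (hsep : ∀ s ∈ S, ∀ t ∈ S, s ≠ t → r < dist s t) :
    (S.card : ℝ) ≤ (1 + 2 * C / r) ^ d := by
  set v : ℝ≥0∞ := volume (ball (0 : EuclideanSpace ℝ (Fin d)) 1) with hv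
  have hv0 : v ≠ 0 := (measure_ball_pos volume _ one_pos).ne'
  have hvt : v ≠ ⊤ := measure_ball_lt_top.ne
  have hdisj : (S : Set (EuclideanSpace ℝ (Fin d))).PairwiseDisjoint
      (fun s => closedBall s (r / 2)) := by
    intro s hs t ht hst
    exact closedBall_disjoint_closedBall (by
      have := hsep s hs t ht hst; linarith)
  have hsum : ∑ s ∈ S, volume (closedBall s (r / 2))
      = volume (⋃ s ∈ S, closedBall s (r / 2)) :=
    (measure_biUnion_finset hdisj fun s _ => measurableSet_closedBall).symm
  have hsub : (⋃ s ∈ S, closedBall s (r / 2)) ⊆ closedBall ξ₀ (C + r / 2) := by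
    intro y hy
    simp only [Set.mem_iUnion] at hy
    obtain ⟨s, hsS, hys⟩ := hy
    have h1 : dist y s ≤ r / 2 := hys
    have h2 : dist s ξ₀ ≤ C := hS s hsS
    have := dist_triangle y s ξ₀
    simp only [mem_closedBall]
    linarith
  have hballvol : ∀ s : EuclideanSpace ℝ (Fin d),
      volume (closedBall s (r / 2)) = ENNReal.ofReal ((r / 2) ^ d) * v := by
    intro s
    rw [Measure.addHaar_closedBall volume s (by linarith), finrank_euclideanSpace_fin]
  have hbig : volume (closedBall ξ₀ (C + r / 2))
      = ENNReal.ofReal ((C + r / 2) ^ d) * v := by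
    rw [Measure.addHaar_closedBall volume ξ₀ (by linarith), finrank_euclideanSpace_fin]
  have key : (S.card : ℝ≥0∞) * ENNReal.ofReal ((r / 2) ^ d) * v
      ≤ ENNReal.ofReal ((C + r / 2) ^ d) * v := by
    calc (S.card : ℝ≥0∞) * ENNReal.ofReal ((r / 2) ^ d) * v
        = ∑ s ∈ S, volume (closedBall s (r / 2)) := by
          rw [Finset.sum_congr rfl fun s _ => hballvol s, Finset.sum_const, nsmul_eq_mul,
            mul_assoc]
      _ = volume (⋃ s ∈ S, closedBall s (r / 2)) := hsum
      _ ≤ volume (closedBall ξ₀ (C + r / 2)) := measure_mono hsub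
      _ = _ := hbig
  have key2 : (S.card : ℝ≥0∞) * ENNReal.ofReal ((r / 2) ^ d)
      ≤ ENNReal.ofReal ((C + r / 2) ^ d) :=
    (ENNReal.mul_le_mul_iff_left hv0 hvt).mp key
  have key3 : (S.card : ℝ) * (r / 2) ^ d ≤ (C + r / 2) ^ d := by
    rw [← ENNReal.ofReal_natCast, ← ENNReal.ofReal_mul (by positivity)] at key2
    exact (ENNReal.ofReal_le_ofReal_iff (by positivity)).mp key2
  have hrd : (0:ℝ) < (r / 2) ^ d := by positivity
  have heq : (1 + 2 * C / r) ^ d = (C + r / 2) ^ d / (r / 2) ^ d := by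
    rw [← div_pow]
    congr 1
    field_simp
    ring
  rw [heq, le_div_iff₀ hrd]
  exact key3

lemma exists_net (d : ℕ) (ξ₀ : EuclideanSpace ℝ (Fin d)) (C r : ℝ)
    (hC : 0 < C) (hr : 0 < r) :
    ∃ T : Finset (EuclideanSpace ℝ (Fin d)),
      (∀ t ∈ T, t ∈ closedBall ξ₀ C) ∧
      (∀ ξ ∈ closedBall ξ₀ C, ∃ t ∈ T, dist ξ t ≤ r) ∧
      (T.card : ℝ) ≤ (1 + 2 * C / r) ^ d := by
  classical
  by_cases hgood : ∃ T : Finset (EuclideanSpace ℝ (Fin d)),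
      (∀ t ∈ T, t ∈ closedBall ξ₀ C) ∧
      (∀ s ∈ T, ∀ t ∈ T, s ≠ t → r < dist s t) ∧
      (∀ ξ ∈ closedBall ξ₀ C, ∃ t ∈ T, dist ξ t ≤ r)
  · obtain ⟨T, h1, h2, h3⟩ := hgood
    exact ⟨T, h1, h3, card_le_of_separated d ξ₀ C r hC hr T h1 h2⟩
  · exfalso
    -- build arbitrarily large separated sets
    have step : ∀ k : ℕ, ∃ S : Finset (EuclideanSpace ℝ (Fin d)),
        (∀ s ∈ S, s ∈ closedBall ξ₀ C) ∧
        (∀ s ∈ S, ∀ t ∈ S, s ≠ t → r < dist s t) ∧ k ≤ S.card := by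
      intro k
      induction k with
      | zero => exact ⟨∅, by simp, by simp, by simp⟩
      | succ m ih =>
        obtain ⟨S, hS1, hS2, hS3⟩ := ih
        by_cases hcov : ∀ ξ ∈ closedBall ξ₀ C, ∃ t ∈ S, dist ξ t ≤ r
        · exact absurd ⟨S, hS1, hS2, hcov⟩ hgood
        · push_neg at hcov
          obtain ⟨ξ, hξmem, hξfar⟩ := hcov
          have hξnotS : ξ ∉ S := by
            intro hmem
            have := hξfar ξ hmem
            simp at this
            linarith
          refine ⟨insert ξ S, ?_, ?_, ?_⟩
          · intro s hs
            rcases Finset.mem_insert.mp hs with h | h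
            · rwa [h]
            · exact hS1 s h
          · intro s hs t ht hst
            rcases Finset.mem_insert.mp hs with h | h <;>
              rcases Finset.mem_insert.mp ht with h' | h'
            · exact absurd (h.trans h'.symm) hst
            · rw [h]; exact hξfar t h'
            · rw [h', dist_comm]; exact hξfar s h
            · exact hS2 s h t h' hst
          · rw [Finset.card_insert_of_notMem hξnotS]
            omega
    obtain ⟨S, hS1, hS2, hS3⟩ := step (⌊(1 + 2 * C / r) ^ d⌋₊ + 1)
    have hb := card_le_of_separated d ξ₀ C r hC hr S hS1 hS2
    have : S.card ≤ ⌊(1 + 2 * C / r) ^ d⌋₊ := Nat.le_floor hb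
    omega


lemma exists_measurable_lip {E : Type*} [MeasurableSpace E] {d : ℕ}
    (ξ₀ : EuclideanSpace ℝ (Fin d)) (C : ℝ) (hC : 0 < C)
    (h : EuclideanSpace ℝ (Fin d) → E → ℝ) (hmeas_h : ∀ ξ, Measurable (h ξ))
    (M : E → ℝ) (hM0 : ∀ e, 0 ≤ M e)
    (hLip : ∀ ξ ∈ closedBall ξ₀ C, ∀ ξ' ∈ closedBall ξ₀ C, ∀ e : E,
      |h ξ e - h ξ' e| ≤ M e * ‖ξ - ξ'‖) :
    ∃ M' : E → ℝ, Measurable M' ∧ (∀ e, 0 ≤ M' e) ∧ (∀ e, M' e ≤ M e) ∧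
      ∀ ξ ∈ closedBall ξ₀ C, ∀ ξ' ∈ closedBall ξ₀ C, ∀ e : E,
        |h ξ e - h ξ' e| ≤ M' e * ‖ξ - ξ'‖ := by
  have hne : Nonempty ↥(closedBall ξ₀ C) := ⟨⟨ξ₀, mem_closedBall_self hC.le⟩⟩
  set u : ℕ → EuclideanSpace ℝ (Fin d) :=
    fun k => (TopologicalSpace.denseSeq ↥(closedBall ξ₀ C) k : EuclideanSpace ℝ (Fin d))
    with hu
  have humem : ∀ k, u k ∈ closedBall ξ₀ C := fun k =>
    (TopologicalSpace.denseSeq ↥(closedBall ξ₀ C) k).2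
  have happrox : ∀ ξ ∈ closedBall ξ₀ C, ∀ η : ℝ, 0 < η → ∃ k, ‖ξ - u k‖ < η := by
    intro ξ hξ η hη
    obtain ⟨k, hk⟩ := Metric.denseRange_iff.mp
      (TopologicalSpace.denseRange_denseSeq ↥(closedBall ξ₀ C)) ⟨ξ, hξ⟩ η hη
    refine ⟨k, ?_⟩
    rw [Subtype.dist_eq] at hk
    rwa [← dist_eq_norm]
  set F : E → ℝ≥0∞ := fun e => ⨆ p : ℕ × ℕ,
    ENNReal.ofReal (|h (u p.1) e - h (u p.2) e| / ‖u p.1 - u p.2‖) with hF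
  have hratio : ∀ (k m : ℕ) (e : E), |h (u k) e - h (u m) e| / ‖u k - u m‖ ≤ M e := by
    intro k m e
    by_cases heq : u k = u m
    · simp [heq, hM0 e]
    · have hpos : 0 < ‖u k - u m‖ := by
        rw [norm_pos_iff]
        exact sub_ne_zero.mpr heq
      rw [div_le_iff₀ hpos]
      exact hLip _ (humem k) _ (humem m) e
  have hFle : ∀ e, F e ≤ ENNReal.ofReal (M e) := by
    intro e
    exact iSup_le fun p => ENNReal.ofReal_le_ofReal (hratio p.1 p.2 e)
  have hFne : ∀ e, F e ≠ ⊤ := fun e => ((hFle e).trans_lt ENNReal.ofReal_lt_top).ne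
  refine ⟨fun e => (F e).toReal, ?_, fun e => ENNReal.toReal_nonneg, ?_, ?_⟩
  · apply Measurable.ennreal_toReal
    exact Measurable.iSup fun p =>
      ((((hmeas_h (u p.1)).sub (hmeas_h (u p.2))).abs).div_const _).ennreal_ofReal
  · intro e
    exact ENNReal.toReal_le_of_le_ofReal (hM0 e) (hFle e)
  · intro ξ hξ ξ' hξ' e
    have hM'0 : 0 ≤ (F e).toReal := ENNReal.toReal_nonneg
    have hpair : ∀ k m : ℕ, |h (u k) e - h (u m) e| ≤ (F e).toReal * ‖u k - u m‖ := by
      intro k m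
      by_cases heq : u k = u m
      · rw [heq]
        simp [mul_nonneg hM'0 (norm_nonneg _)]
      · have hpos : 0 < ‖u k - u m‖ := by
          rw [norm_pos_iff]; exact sub_ne_zero.mpr heq
        have h1 : ENNReal.ofReal (|h (u k) e - h (u m) e| / ‖u k - u m‖) ≤ F e :=
          le_iSup (fun p : ℕ × ℕ =>
            ENNReal.ofReal (|h (u p.1) e - h (u p.2) e| / ‖u p.1 - u p.2‖)) (k, m)
        have h2 : |h (u k) e - h (u m) e| / ‖u k - u m‖ ≤ (F e).toReal := by
          have := ENNReal.toReal_mono (hFne e) h1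
          rwa [ENNReal.toReal_ofReal (by positivity)] at this
        rw [div_le_iff₀ hpos] at h2
        exact h2
    apply le_of_forall_pos_le_add
    intro η' hη'
    set c : ℝ := 2 * M e + 2 * (F e).toReal + 1 with hc
    have hcpos : 0 < c := by
      have := hM0 e
      positivity
    set η : ℝ := η' / c with hη
    have hηpos : 0 < η := by positivity
    obtain ⟨k, hk⟩ := happrox ξ hξ η hηpos
    obtain ⟨m, hm⟩ := happrox ξ' hξ' η hηpos
    have a1 : |h ξ e - h (u k) e| ≤ M e * η :=
      (hLip ξ hξ _ (humem k) e).trans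
        (mul_le_mul_of_nonneg_left hk.le (hM0 e))
    have a3 : |h (u m) e - h ξ' e| ≤ M e * η := by
      refine (hLip _ (humem m) ξ' hξ' e).trans ?_
      have : ‖u m - ξ'‖ = ‖ξ' - u m‖ := norm_sub_rev _ _
      rw [this]
      exact mul_le_mul_of_nonneg_left hm.le (hM0 e)
    have a2 : |h (u k) e - h (u m) e| ≤ (F e).toReal * ‖u k - u m‖ := hpair k m
    have nrm : ‖u k - u m‖ ≤ ‖ξ - ξ'‖ + 2 * η := by
      have t1 : ‖u k - u m‖ ≤ ‖u k - ξ‖ + ‖ξ - ξ'‖ + ‖ξ' - u m‖ := by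
        have := norm_sub_le_norm_sub_add_norm_sub (u k) ξ (u m)
        have := norm_sub_le_norm_sub_add_norm_sub ξ ξ' (u m)
        linarith
      have t2 : ‖u k - ξ‖ = ‖ξ - u k‖ := norm_sub_rev _ _
      linarith [hk.le, hm.le, t1, t2.le, t2.ge]
    have tri : |h ξ e - h ξ' e| ≤
        |h ξ e - h (u k) e| + |h (u k) e - h (u m) e| + |h (u m) e - h ξ' e| := by
      have := abs_sub_le (h ξ e) (h (u k) e) (h ξ' e)
      have := abs_sub_le (h (u k) e) (h (u m) e) (h ξ' e)
      linarith
    have bound : |h ξ e - h ξ' e| ≤ (F e).toReal * ‖ξ - ξ'‖ + c * η := by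
      have a2' : |h (u k) e - h (u m) e| ≤ (F e).toReal * (‖ξ - ξ'‖ + 2 * η) :=
        a2.trans (mul_le_mul_of_nonneg_left nrm hM'0)
      have hMe := hM0 e
      nlinarith [hηpos.le]
    have : c * η = η' := by
      rw [hη]
      field_simp
    linarith [bound, this.le, this.ge]


lemma chernoff_aux {Ω E : Type*} [MeasurableSpace Ω] [MeasurableSpace E]
    (μ : Measure Ω) [IsProbabilityMeasure μ]
    {n : ℕ} (hn : n ≠ 0) (x : Fin n → Ω → E) (X₀ : Ω → E)
    (hmeas : ∀ i, Measurable (x i)) (hmeas₀ : Measurable X₀)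
    (hindep : iIndepFun x μ)
    (hident : ∀ i, IdentDistrib (x i) X₀ μ μ)
    (g : E → ℝ) (hg : Measurable g) (c : ℝ)
    (σ : ℝ) (hσ : 0 < σ) (t₀ : ℝ≥0∞) (ht₀ : 0 < t₀)
    (hmgf : ∀ t : ℝ, ENNReal.ofReal |t| < t₀ →
      ∫⁻ ω, ENNReal.ofReal (Real.exp (t * (g (X₀ ω) - c))) ∂μ
        ≤ ENNReal.ofReal (Real.exp (σ ^ 2 * t ^ 2 / 2)))
    (a : ℝ) (ha : 0 < a) :
    μ {ω | a ≤ |(1 / (n : ℝ)) * ∑ i, g (x i ω) - c|}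
      ≤ ENNReal.ofReal
        (2 * Real.exp (-(n : ℝ) * a ^ 2 / (2 * (σ ^ 2 + a * t₀⁻¹.toReal)))) := by
  set τ : ℝ := t₀⁻¹.toReal with hτ
  have hτ0 : 0 ≤ τ := ENNReal.toReal_nonneg
  set β : ℝ := σ ^ 2 + a * τ with hβ
  have hβpos : 0 < β := by positivity
  set t : ℝ := a / β with ht
  have htpos : 0 < t := by positivity
  have htt₀ : ENNReal.ofReal t < t₀ := by
    rcases eq_or_ne t₀ ⊤ with h | h
    · rw [h]; exact ENNReal.ofReal_lt_top
    · have ht₀pos : 0 < t₀.toReal := ENNReal.toReal_pos ht₀.ne' h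
      have hτeq : τ = 1 / t₀.toReal := by
        rw [hτ, ENNReal.toReal_inv, one_div]
      have : t < t₀.toReal := by
        rw [ht, div_lt_iff₀ hβpos, hβ, hτeq]
        have hexpand : t₀.toReal * (σ ^ 2 + a * (1 / t₀.toReal))
            = t₀.toReal * σ ^ 2 + a := by field_simp
        rw [hexpand]
        nlinarith [mul_pos ht₀pos (pow_pos hσ 2)]
      calc ENNReal.ofReal t < ENNReal.ofReal t₀.toReal :=
            ENNReal.ofReal_lt_ofReal_iff_of_nonneg htpos.le |>.mpr this
        _ = t₀ := ENNReal.ofReal_toReal h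
  -- per-sign argument
  have key : ∀ s : ℝ, (s = 1 ∨ s = -1) →
      μ {ω | (n : ℝ) * a ≤ ∑ i, s * (g (x i ω) - c)}
        ≤ ENNReal.ofReal (Real.exp (-(n : ℝ) * a ^ 2 / (2 * β))) := by
    intro s hs
    set Y : Fin n → Ω → ℝ := fun i ω => s * (g (x i ω) - c) with hY
    have hYmeas : ∀ i, Measurable (Y i) :=
      fun i => (measurable_const.mul (((hg.comp (hmeas i))).sub measurable_const))
    have hYindep : iIndepFun Y μ := by
      have := hindep.comp (fun _ e => s * (g e - c))
        (fun _ => measurable_const.mul (hg.sub measurable_const))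
      exact this
    -- mgf bound for each Y i at parameter t
    have hmgfY : ∀ i, ∫⁻ ω, ENNReal.ofReal (Real.exp (t * Y i ω)) ∂μ
        ≤ ENNReal.ofReal (Real.exp (σ ^ 2 * t ^ 2 / 2)) := by
      intro i
      have hmap : Measure.map (x i) μ = Measure.map X₀ μ := (hident i).map_eq
      have hφ : Measurable fun e => ENNReal.ofReal (Real.exp (t * (s * (g e - c)))) :=
        ((measurable_const.mul
          (measurable_const.mul (hg.sub measurable_const))).exp).ennreal_ofReal
      have e1 : ∫⁻ ω, ENNReal.ofReal (Real.exp (t * Y i ω)) ∂μ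
          = ∫⁻ e, ENNReal.ofReal (Real.exp (t * (s * (g e - c)))) ∂(Measure.map (x i) μ) :=
        (lintegral_map hφ (hmeas i)).symm
      have e2 : ∫⁻ e, ENNReal.ofReal (Real.exp (t * (s * (g e - c)))) ∂(Measure.map X₀ μ)
          = ∫⁻ ω, ENNReal.ofReal (Real.exp ((t * s) * (g (X₀ ω) - c))) ∂μ := by
        rw [lintegral_map hφ hmeas₀]
        congr 1 with ω
        ring_nf
      have habs : ENNReal.ofReal |t * s| < t₀ := by
        have : |t * s| = t := by
          rcases hs with h | h <;> rw [h] <;> simp [abs_of_pos htpos]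
        rwa [this]
      have e3 := hmgf (t * s) habs
      have hsq : σ ^ 2 * (t * s) ^ 2 / 2 = σ ^ 2 * t ^ 2 / 2 := by
        rcases hs with h | h <;> rw [h] <;> ring
      rw [e1, hmap, e2]
      rw [hsq] at e3
      exact e3
    -- integrability of exp(t * Y i)
    have hint : ∀ i, Integrable (fun ω => Real.exp (t * Y i ω)) μ := by
      intro i
      constructor
      · exact ((measurable_const.mul (hYmeas i)).exp).aestronglyMeasurable
      · rw [hasFiniteIntegral_iff_norm]
        have : ∀ ω, ENNReal.ofReal ‖Real.exp (t * Y i ω)‖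
            = ENNReal.ofReal (Real.exp (t * Y i ω)) := by
          intro ω; rw [Real.norm_eq_abs, abs_of_pos (Real.exp_pos _)]
        calc ∫⁻ ω, ENNReal.ofReal ‖Real.exp (t * Y i ω)‖ ∂μ
            = ∫⁻ ω, ENNReal.ofReal (Real.exp (t * Y i ω)) ∂μ := by
              exact lintegral_congr fun ω => this ω
          _ ≤ ENNReal.ofReal (Real.exp (σ ^ 2 * t ^ 2 / 2)) := hmgfY i
          _ < ⊤ := ENNReal.ofReal_lt_top
    -- mgf of each Y i bounded
    have hmgf_bound : ∀ i, mgf (Y i) μ t ≤ Real.exp (σ ^ 2 * t ^ 2 / 2) := by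
      intro i
      have : mgf (Y i) μ t = (∫⁻ ω, ENNReal.ofReal (Real.exp (t * Y i ω)) ∂μ).toReal := by
        rw [mgf]
        exact (integral_eq_lintegral_of_nonneg_ae (f := fun ω => Real.exp (t * Y i ω)) (Filter.Eventually.of_forall fun ω =>
          (Real.exp_pos _).le) ((measurable_const.mul (hYmeas i)).exp).aestronglyMeasurable)
      rw [this]
      exact ENNReal.toReal_le_of_le_ofReal (Real.exp_pos _).le (hmgfY i)
    -- Chernoff
    have hintsum : Integrable (fun ω => Real.exp (t * (∑ i, Y i) ω)) μ :=
      hYindep.integrable_exp_mul_sum hYmeas (fun i _ => hint i)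
    have hmark := measure_ge_le_exp_mul_mgf (X := ∑ i, Y i) (μ := μ)
      ((n : ℝ) * a) htpos.le hintsum
    have hmgfsum : mgf (∑ i, Y i) μ t ≤ Real.exp (σ ^ 2 * t ^ 2 / 2) ^ n := by
      rw [hYindep.mgf_sum hYmeas Finset.univ]
      calc ∏ i, mgf (Y i) μ t ≤ ∏ _i : Fin n, Real.exp (σ ^ 2 * t ^ 2 / 2) :=
            Finset.prod_le_prod (fun i _ => mgf_nonneg) (fun i _ => hmgf_bound i)
        _ = Real.exp (σ ^ 2 * t ^ 2 / 2) ^ n := by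
            rw [Finset.prod_const, Finset.card_univ, Fintype.card_fin]
    have hexp_bound : Real.exp (-t * ((n : ℝ) * a)) * Real.exp (σ ^ 2 * t ^ 2 / 2) ^ n
        ≤ Real.exp (-(n : ℝ) * a ^ 2 / (2 * β)) := by
      rw [← Real.exp_nat_mul, ← Real.exp_add]
      apply Real.exp_le_exp.mpr
      have hts : t = a / β := ht
      have h1 : -t * ((n : ℝ) * a) + (n : ℝ) * (σ ^ 2 * t ^ 2 / 2)
          = (n : ℝ) * (σ ^ 2 * t ^ 2 / 2 - t * a) := by ring
      rw [h1]
      have h2 : σ ^ 2 * t ^ 2 / 2 - t * a ≤ -(a ^ 2 / (2 * β)) := by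
        rw [hts]
        have hσβ : σ ^ 2 ≤ β := by
          rw [hβ]; nlinarith [mul_nonneg ha.le hτ0]
        have e : (a / β) * a = a ^ 2 / β := by ring
        have e2 : σ ^ 2 * (a / β) ^ 2 ≤ a ^ 2 / β := by
          rw [div_pow, mul_div_assoc', div_le_div_iff₀ (by positivity) hβpos]
          nlinarith [mul_le_mul_of_nonneg_right hσβ (mul_nonneg (sq_nonneg a) hβpos.le)]
        have e3 : a ^ 2 / (2 * β) = (a ^ 2 / β) / 2 := by
          field_simp
        rw [e, e3]
        linarith
      have h3 : (n : ℝ) * (σ ^ 2 * t ^ 2 / 2 - t * a) ≤ (n : ℝ) * (-(a ^ 2 / (2 * β))) :=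
        mul_le_mul_of_nonneg_left h2 (Nat.cast_nonneg n)
      calc (n : ℝ) * (σ ^ 2 * t ^ 2 / 2 - t * a) ≤ (n : ℝ) * (-(a ^ 2 / (2 * β))) := h3
        _ = -(n : ℝ) * a ^ 2 / (2 * β) := by ring
    have hfin : μ {ω | (n : ℝ) * a ≤ (∑ i, Y i) ω} ≠ ⊤ := measure_ne_top μ _
    have : (μ {ω | (n : ℝ) * a ≤ (∑ i, Y i) ω}).toReal
        ≤ Real.exp (-(n : ℝ) * a ^ 2 / (2 * β)) := by
      calc (μ {ω | (n : ℝ) * a ≤ (∑ i, Y i) ω}).toReal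
          ≤ Real.exp (-t * ((n : ℝ) * a)) * mgf (∑ i, Y i) μ t := hmark
        _ ≤ Real.exp (-t * ((n : ℝ) * a)) * Real.exp (σ ^ 2 * t ^ 2 / 2) ^ n := by
            apply mul_le_mul_of_nonneg_left hmgfsum (Real.exp_pos _).le
        _ ≤ Real.exp (-(n : ℝ) * a ^ 2 / (2 * β)) := hexp_bound
    have hset : {ω | (n : ℝ) * a ≤ ∑ i, Y i ω} = {ω | (n : ℝ) * a ≤ (∑ i, Y i) ω} := by
      ext ω; simp [Finset.sum_apply]
    rw [hset]
    exact (ENNReal.le_ofReal_iff_toReal_le hfin (Real.exp_pos _).le).mpr this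
  -- combine the two tails
  have hsubset : {ω | a ≤ |(1 / (n : ℝ)) * ∑ i, g (x i ω) - c|}
      ⊆ {ω | (n : ℝ) * a ≤ ∑ i, (1:ℝ) * (g (x i ω) - c)}
        ∪ {ω | (n : ℝ) * a ≤ ∑ i, (-1:ℝ) * (g (x i ω) - c)} := by
    intro ω hω
    simp only [Set.mem_setOf_eq] at hω
    have hnpos : (0:ℝ) < n := by exact_mod_cast Nat.pos_of_ne_zero hn
    have hmean : (1 / (n : ℝ)) * ∑ i, g (x i ω) - c
        = (1 / (n : ℝ)) * ∑ i, (g (x i ω) - c) := by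
      rw [Finset.sum_sub_distrib, Finset.sum_const, Finset.card_univ, Fintype.card_fin,
        nsmul_eq_mul, mul_sub]
      field_simp
    set S : ℝ := ∑ i, (g (x i ω) - c) with hS
    rw [hmean] at hω
    have h1 : |(1 / (n : ℝ)) * S| = |S| / n := by
      rw [abs_mul, abs_of_pos (by positivity : (0:ℝ) < 1 / (n:ℝ))]
      ring
    rw [h1, le_div_iff₀ hnpos] at hω
    rcases abs_cases S with ⟨he, _⟩ | ⟨he, _⟩
    · left
      simp only [Set.mem_setOf_eq, one_mul]
      rw [he] at hω
      rw [← hS]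
      linarith
    · right
      simp only [Set.mem_setOf_eq]
      have hsum : ∑ i, (-1:ℝ) * (g (x i ω) - c) = -S := by
        rw [hS, ← Finset.sum_neg_distrib]
        apply Finset.sum_congr rfl
        intro i _
        ring
      rw [hsum]
      rw [he] at hω
      linarith
  calc μ {ω | a ≤ |(1 / (n : ℝ)) * ∑ i, g (x i ω) - c|}
      ≤ μ ({ω | (n : ℝ) * a ≤ ∑ i, (1:ℝ) * (g (x i ω) - c)}
        ∪ {ω | (n : ℝ) * a ≤ ∑ i, (-1:ℝ) * (g (x i ω) - c)}) := measure_mono hsubset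
    _ ≤ μ {ω | (n : ℝ) * a ≤ ∑ i, (1:ℝ) * (g (x i ω) - c)}
        + μ {ω | (n : ℝ) * a ≤ ∑ i, (-1:ℝ) * (g (x i ω) - c)} := measure_union_le _ _
    _ ≤ ENNReal.ofReal (Real.exp (-(n : ℝ) * a ^ 2 / (2 * β)))
        + ENNReal.ofReal (Real.exp (-(n : ℝ) * a ^ 2 / (2 * β))) :=
          add_le_add (key 1 (Or.inl rfl)) (key (-1) (Or.inr rfl))
    _ = ENNReal.ofReal (2 * Real.exp (-(n : ℝ) * a ^ 2 / (2 * β))) := by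
        rw [← ENNReal.ofReal_add (Real.exp_pos _).le (Real.exp_pos _).le]
        congr 1
        ring
    _ = ENNReal.ofReal
        (2 * Real.exp (-(n : ℝ) * a ^ 2 / (2 * (σ ^ 2 + a * t₀⁻¹.toReal)))) := by
        rw [hβ, hτ]

set_option maxHeartbeats 2000000 in
/-- **Uniform law of large numbers over a ball.**
For i.i.d. copies `x⁽ⁱ⁾` of `X`, a Lipschitz-in-parameter family `h(ξ; ·)` over the
Euclidean ball `Ξ = {‖ξ − ξ₀‖₂ ≤ C}` with `E[M(X)²] = V_M < ∞`, and a uniform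
sub-Gaussian MGF bound, for any `ε > 0` and `0 < δ ≤ 1`,
`P(sup_{ξ∈Ξ} |(1/n)Σᵢ h(ξ; x⁽ⁱ⁾) − E_h(ξ)| ≥ ε)
  ≤ δ/2 + 2 exp(d log(1 + 16C√(V_M)√d/(εδ)) − nε²/(8(σ² + ε/t₀)))`. -/
theorem uniform_lln_ball
    {Ω E : Type*} [MeasurableSpace Ω] [MeasurableSpace E]
    (μ : Measure Ω) [IsProbabilityMeasure μ]
    (n d : ℕ) (x : Fin n → Ω → E) (X₀ : Ω → E)
    (hmeas : ∀ i, Measurable (x i)) (hmeas₀ : Measurable X₀)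
    (hindep : iIndepFun x μ)
    (hident : ∀ i, IdentDistrib (x i) X₀ μ μ)
    (C : ℝ) (hC : 0 < C) (ξ₀ : EuclideanSpace ℝ (Fin d))
    (h : EuclideanSpace ℝ (Fin d) → E → ℝ)
    (hmeas_h : ∀ ξ, Measurable (h ξ))
    (M : E → ℝ) (VM : ℝ)
    (hVM : VM = ∫ ω, (M (X₀ ω)) ^ 2 ∂μ)
    (hVMfin : Integrable (fun ω => (M (X₀ ω)) ^ 2) μ)
    (hLip : ∀ ξ ∈ Metric.closedBall ξ₀ C, ∀ ξ' ∈ Metric.closedBall ξ₀ C, ∀ e : E,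
      |h ξ e - h ξ' e| ≤ M e * ‖ξ - ξ'‖)
    (Eh : EuclideanSpace ℝ (Fin d) → ℝ) (hEh : ∀ ξ, Eh ξ = ∫ ω, h ξ (X₀ ω) ∂μ)
    (σ : ℝ) (hσ : 0 < σ) (t₀ : ℝ≥0∞) (ht₀ : 0 < t₀)
    (hmgf : ∀ ξ ∈ Metric.closedBall ξ₀ C, ∀ t : ℝ, ENNReal.ofReal |t| < t₀ →
      ∫⁻ ω, ENNReal.ofReal (Real.exp (t * (h ξ (X₀ ω) - Eh ξ))) ∂μ
        ≤ ENNReal.ofReal (Real.exp (σ ^ 2 * t ^ 2 / 2)))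
    (ε δ : ℝ) (hε : 0 < ε) (hδ : 0 < δ) (hδ1 : δ ≤ 1) :
    μ {ω | ε ≤ ⨆ ξ ∈ Metric.closedBall ξ₀ C,
          |(1 / (n : ℝ)) * ∑ i, h ξ (x i ω) - Eh ξ|}
      ≤ ENNReal.ofReal (δ / 2 +
          2 * Real.exp ((d : ℝ) *
              Real.log (1 + 16 * C * Real.sqrt VM * Real.sqrt d / (ε * δ)) -
            (n : ℝ) * ε ^ 2 / (8 * (σ ^ 2 + ε * t₀⁻¹.toReal)))) := by
  classical
  have hVM0 : 0 ≤ VM := by rw [hVM]; exact integral_nonneg (fun ω => sq_nonneg _)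
  have hξ₀mem : ξ₀ ∈ Metric.closedBall ξ₀ C := Metric.mem_closedBall_self hC.le
  set τ : ℝ := t₀⁻¹.toReal with hτdef
  have hτ0 : (0:ℝ) ≤ τ := ENNReal.toReal_nonneg
  set L : ℝ := 1 + 16 * C * Real.sqrt VM * Real.sqrt d / (ε * δ) with hLdef
  have hL1 : 1 ≤ L := by
    rw [hLdef]
    have : 0 ≤ 16 * C * Real.sqrt VM * Real.sqrt d / (ε * δ) := by positivity
    linarith
  have hLpos : 0 < L := lt_of_lt_of_le one_pos hL1
  have hlogL : 0 ≤ Real.log L := Real.log_nonneg hL1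
  have hβpos : 0 < σ ^ 2 + ε * τ := by positivity
  -- trivial case n = 0
  rcases Nat.eq_zero_or_pos n with hn0 | hnpos
  · have h1 : (1:ℝ) ≤ δ / 2 + 2 * Real.exp ((d : ℝ) * Real.log L
        - (n : ℝ) * ε ^ 2 / (8 * (σ ^ 2 + ε * τ))) := by
      have hz : (n : ℝ) * ε ^ 2 / (8 * (σ ^ 2 + ε * τ)) = 0 := by
        rw [hn0]; simp
      rw [hz, sub_zero]
      have : (1:ℝ) ≤ Real.exp ((d : ℝ) * Real.log L) := by
        rw [show (1:ℝ) = Real.exp 0 from Real.exp_zero.symm]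
        exact Real.exp_le_exp.mpr (by positivity)
      linarith
    calc μ _ ≤ 1 := prob_le_one
      _ = ENNReal.ofReal 1 := ENNReal.ofReal_one.symm
      _ ≤ _ := ENNReal.ofReal_le_ofReal h1
  have hn : n ≠ 0 := hnpos.ne'
  -- Chernoff bound at a fixed parameter in the ball
  have chern : ∀ ξ ∈ Metric.closedBall ξ₀ C, ∀ a : ℝ, 0 < a →
      μ {ω | a ≤ |(1 / (n : ℝ)) * ∑ i, h ξ (x i ω) - Eh ξ|}
        ≤ ENNReal.ofReal (2 * Real.exp (-(n : ℝ) * a ^ 2 / (2 * (σ ^ 2 + a * τ)))) :=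
    fun ξ hξ a ha => chernoff_aux μ hn x X₀ hmeas hmeas₀ hindep hident
      (h ξ) (hmeas_h ξ) (Eh ξ) σ hσ t₀ ht₀ (fun t htlt => hmgf ξ hξ t htlt) a ha
  -- a convenient final bound from a single-point Chernoff estimate
  have single_final : μ {ω | ε ≤ |(1 / (n : ℝ)) * ∑ i, h ξ₀ (x i ω) - Eh ξ₀|}
      ≤ ENNReal.ofReal (δ / 2 + 2 * Real.exp ((d : ℝ) * Real.log L
        - (n : ℝ) * ε ^ 2 / (8 * (σ ^ 2 + ε * τ)))) := by
    refine (chern ξ₀ hξ₀mem ε hε).trans (ENNReal.ofReal_le_ofReal ?_)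
    have hexp : -(n : ℝ) * ε ^ 2 / (2 * (σ ^ 2 + ε * τ))
        ≤ (d : ℝ) * Real.log L - (n : ℝ) * ε ^ 2 / (8 * (σ ^ 2 + ε * τ)) := by
      have h2 : (n : ℝ) * ε ^ 2 / (8 * (σ ^ 2 + ε * τ))
          ≤ (n : ℝ) * ε ^ 2 / (2 * (σ ^ 2 + ε * τ)) := by
        apply div_le_div_of_nonneg_left (by positivity) (by positivity) (by linarith)
      have h3 : -(n : ℝ) * ε ^ 2 / (2 * (σ ^ 2 + ε * τ))
          = -((n : ℝ) * ε ^ 2 / (2 * (σ ^ 2 + ε * τ))) := by ring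
      have h4 : (0:ℝ) ≤ (d : ℝ) * Real.log L := by positivity
      rw [h3]
      have h5 : (0:ℝ) ≤ (n : ℝ) * ε ^ 2 / (8 * (σ ^ 2 + ε * τ)) := by positivity
      linarith
    have := Real.exp_le_exp.mpr hexp
    linarith
  -- case d = 0
  rcases Nat.eq_zero_or_pos d with hd0 | hdpos
  · haveI : IsEmpty (Fin d) := ⟨fun i => by have := i.2; omega⟩
    haveI hsing : Subsingleton (EuclideanSpace ℝ (Fin d)) :=
      ⟨fun a b => PiLp.ext fun i => isEmptyElim i⟩
    have hsub : {ω | ε ≤ ⨆ ξ ∈ Metric.closedBall ξ₀ C,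
          |(1 / (n : ℝ)) * ∑ i, h ξ (x i ω) - Eh ξ|}
        ⊆ {ω | ε ≤ |(1 / (n : ℝ)) * ∑ i, h ξ₀ (x i ω) - Eh ξ₀|} := by
      intro ω hω
      simp only [Set.mem_setOf_eq] at hω ⊢
      refine hω.trans (Real.iSup_le (fun ξ => ?_) (abs_nonneg _))
      have hξeq : ξ = ξ₀ := Subsingleton.elim _ _
      subst hξeq
      exact Real.iSup_le (fun _ => le_rfl) (abs_nonneg _)
    exact (measure_mono hsub).trans single_final
  -- from here on d ≥ 1
  have hsqd1 : (1:ℝ) ≤ Real.sqrt d := by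
    rw [show (1:ℝ) = Real.sqrt 1 from Real.sqrt_one.symm]
    exact Real.sqrt_le_sqrt (by exact_mod_cast hdpos)
  have hsqd0 : (0:ℝ) < Real.sqrt d := lt_of_lt_of_le one_pos hsqd1
  -- M is nonnegative
  set ξ₁ : EuclideanSpace ℝ (Fin d) :=
    ξ₀ + C • EuclideanSpace.single (⟨0, hdpos⟩ : Fin d) (1:ℝ) with hξ₁def
  have hnorm₁ : ‖ξ₁ - ξ₀‖ = C := by
    rw [hξ₁def, add_sub_cancel_left, norm_smul, EuclideanSpace.norm_single,
      Real.norm_eq_abs, abs_of_pos hC, norm_one, mul_one]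
  have hξ₁mem : ξ₁ ∈ Metric.closedBall ξ₀ C := by
    rw [Metric.mem_closedBall, dist_eq_norm, hnorm₁]
  have hM0 : ∀ e, 0 ≤ M e := by
    intro e
    have h1 := (abs_nonneg (h ξ₁ e - h ξ₀ e)).trans (hLip ξ₁ hξ₁mem ξ₀ hξ₀mem e)
    rw [hnorm₁] at h1
    by_contra hcon
    push_neg at hcon
    nlinarith
  obtain ⟨M', hM'meas, hM'0, hM'le, hM'lip⟩ :=
    exists_measurable_lip ξ₀ C hC h hmeas_h M hM0 hLip
  -- L² and L¹ facts about M'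
  have hM'X₀meas : Measurable fun ω => M' (X₀ ω) := hM'meas.comp hmeas₀
  have hM'sq_int : Integrable (fun ω => (M' (X₀ ω)) ^ 2) μ := by
    refine Integrable.mono hVMfin ((hM'X₀meas.pow_const 2).aestronglyMeasurable) ?_
    filter_upwards with ω
    rw [Real.norm_eq_abs, Real.norm_eq_abs, abs_of_nonneg (sq_nonneg _),
      abs_of_nonneg (sq_nonneg _)]
    exact pow_le_pow_left₀ (hM'0 _) (hM'le _) 2
  have hmemL2 : MemLp (fun ω => M' (X₀ ω)) 2 μ :=
    (memLp_two_iff_integrable_sq hM'X₀meas.aestronglyMeasurable).mpr hM'sq_int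
  have hM'int : Integrable (fun ω => M' (X₀ ω)) μ := hmemL2.integrable one_le_two
  set Im : ℝ := ∫ ω, M' (X₀ ω) ∂μ with hImdef
  have hIm0 : 0 ≤ Im := integral_nonneg fun ω => hM'0 _
  have hsqint_le : ∫ ω, (M' (X₀ ω)) ^ 2 ∂μ ≤ VM := by
    rw [hVM]
    refine integral_mono hM'sq_int hVMfin (fun ω => ?_)
    exact pow_le_pow_left₀ (hM'0 _) (hM'le _) 2
  have hImsq : Im ^ 2 ≤ VM := by
    have hvar := variance_nonneg (fun ω => M' (X₀ ω)) μ
    have hvd := variance_eq_sub hmemL2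
    simp only [Pi.pow_apply] at hvd
    rw [hvd] at hvar
    have : Im ^ 2 ≤ ∫ ω, (M' (X₀ ω)) ^ 2 ∂μ := by
      rw [hImdef]; linarith
    linarith
  have hImle : Im ≤ Real.sqrt VM := by
    have := Real.sqrt_le_sqrt hImsq
    rwa [Real.sqrt_sq hIm0] at this
  -- integrability of h ξ ∘ X₀
  obtain ⟨t1, ht1pos, ht1lt⟩ : ∃ t1 : ℝ, 0 < t1 ∧ ENNReal.ofReal t1 < t₀ := by
    rcases eq_or_ne t₀ ⊤ with h' | h'
    · exact ⟨1, one_pos, by rw [h']; exact ENNReal.ofReal_lt_top⟩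
    · have hp : 0 < t₀.toReal := ENNReal.toReal_pos ht₀.ne' h'
      refine ⟨t₀.toReal / 2, by positivity, ?_⟩
      calc ENNReal.ofReal (t₀.toReal / 2) < ENNReal.ofReal t₀.toReal :=
            (ENNReal.ofReal_lt_ofReal_iff hp).mpr (by linarith)
        _ = t₀ := ENNReal.ofReal_toReal h'
  have hexp_int : ∀ ξ ∈ Metric.closedBall ξ₀ C, ∀ s : ℝ, ENNReal.ofReal |s| < t₀ →
      Integrable (fun ω => Real.exp (s * (h ξ (X₀ ω) - Eh ξ))) μ := by
    intro ξ hξ s hs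
    constructor
    · exact ((measurable_const.mul
        (((hmeas_h ξ).comp hmeas₀).sub measurable_const)).exp).aestronglyMeasurable
    · rw [hasFiniteIntegral_iff_norm]
      calc ∫⁻ ω, ENNReal.ofReal ‖Real.exp (s * (h ξ (X₀ ω) - Eh ξ))‖ ∂μ
          = ∫⁻ ω, ENNReal.ofReal (Real.exp (s * (h ξ (X₀ ω) - Eh ξ))) ∂μ := by
            apply lintegral_congr
            intro ω
            rw [Real.norm_eq_abs, abs_of_pos (Real.exp_pos _)]
        _ ≤ ENNReal.ofReal (Real.exp (σ ^ 2 * s ^ 2 / 2)) := hmgf ξ hξ s hs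
        _ < ⊤ := ENNReal.ofReal_lt_top
  have hInt : ∀ ξ ∈ Metric.closedBall ξ₀ C, Integrable (fun ω => h ξ (X₀ ω)) μ := by
    intro ξ hξ
    have ha1 : ENNReal.ofReal |t1| < t₀ := by rwa [abs_of_pos ht1pos]
    have ha2 : ENNReal.ofReal |(-t1)| < t₀ := by rwa [abs_neg, abs_of_pos ht1pos]
    have he1 := hexp_int ξ hξ t1 ha1
    have he2 := hexp_int ξ hξ (-t1) ha2
    have hZint : Integrable (fun ω => h ξ (X₀ ω) - Eh ξ) μ := by
      refine Integrable.mono' ((he1.add he2).div_const t1)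
        ((((hmeas_h ξ).comp hmeas₀).sub measurable_const).aestronglyMeasurable) ?_
      filter_upwards with ω
      set z : ℝ := h ξ (X₀ ω) - Eh ξ with hz
      rw [Real.norm_eq_abs]
      rw [le_div_iff₀ ht1pos]
      have hb1 : t1 * |z| ≤ Real.exp (t1 * |z|) := by
        have := Real.add_one_le_exp (t1 * |z|)
        linarith
      have hb2 : Real.exp (t1 * |z|) ≤ Real.exp (t1 * z) + Real.exp (-t1 * z) := by
        rcases abs_cases z with ⟨he, _⟩ | ⟨he, _⟩
        · rw [he]
          have := Real.exp_pos (-t1 * z)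
          linarith
        · rw [he]
          have hneg : Real.exp (t1 * -z) = Real.exp (-t1 * z) := by ring_nf
          rw [hneg]
          have := Real.exp_pos (t1 * z)
          linarith
      calc |z| * t1 = t1 * |z| := by ring
        _ ≤ Real.exp (t1 * z) + Real.exp (-t1 * z) := hb1.trans hb2
    exact (hZint.add (integrable_const (Eh ξ))).congr
      (Filter.Eventually.of_forall fun ω => by simp)
  -- Lipschitz bound for Eh
  have hEhLip : ∀ ξ ∈ Metric.closedBall ξ₀ C, ∀ ξ' ∈ Metric.closedBall ξ₀ C,
      |Eh ξ - Eh ξ'| ≤ Im * ‖ξ - ξ'‖ := by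
    intro ξ hξ ξ' hξ'
    rw [hEh ξ, hEh ξ', ← integral_sub (hInt ξ hξ) (hInt ξ' hξ')]
    calc |∫ ω, (h ξ (X₀ ω) - h ξ' (X₀ ω)) ∂μ|
        ≤ ∫ ω, |h ξ (X₀ ω) - h ξ' (X₀ ω)| ∂μ := by
          simpa [Real.norm_eq_abs] using
            norm_integral_le_integral_norm (fun ω => h ξ (X₀ ω) - h ξ' (X₀ ω))
      _ ≤ ∫ ω, M' (X₀ ω) * ‖ξ - ξ'‖ ∂μ := by
          refine integral_mono ((hInt ξ hξ).sub (hInt ξ' hξ')).abs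
            (hM'int.mul_const _) (fun ω => ?_)
          exact hM'lip ξ hξ ξ' hξ' (X₀ ω)
      _ = Im * ‖ξ - ξ'‖ := by rw [integral_mul_const]
  -- common lintegral identity
  have hlint_i : ∀ i, ∫⁻ ω, ENNReal.ofReal (M' (x i ω)) ∂μ = ENNReal.ofReal Im := by
    intro i
    have hφ : Measurable fun e => ENNReal.ofReal (M' e) := hM'meas.ennreal_ofReal
    calc ∫⁻ ω, ENNReal.ofReal (M' (x i ω)) ∂μ
        = ∫⁻ e, ENNReal.ofReal (M' e) ∂(Measure.map (x i) μ) :=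
          (lintegral_map hφ (hmeas i)).symm
      _ = ∫⁻ e, ENNReal.ofReal (M' e) ∂(Measure.map X₀ μ) := by rw [(hident i).map_eq]
      _ = ∫⁻ ω, ENNReal.ofReal (M' (X₀ ω)) ∂μ := lintegral_map hφ hmeas₀
      _ = ENNReal.ofReal Im :=
          (ofReal_integral_eq_lintegral_ofReal hM'int
            (Filter.Eventually.of_forall fun ω => hM'0 _)).symm
  -- case VM = 0
  by_cases hVMz : VM = 0
  · have hsq0 : ∫ ω, (M' (X₀ ω)) ^ 2 ∂μ = 0 :=
      le_antisymm (hVMz ▸ hsqint_le) (integral_nonneg fun ω => sq_nonneg _)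
    have haesq := (integral_eq_zero_iff_of_nonneg
      (fun ω => sq_nonneg (M' (X₀ ω))) hM'sq_int).mp hsq0
    have hae : ∀ᵐ ω ∂μ, M' (X₀ ω) = 0 := by
      filter_upwards [haesq] with ω hω
      have h2 : (M' (X₀ ω)) ^ 2 = 0 := hω
      exact pow_eq_zero_iff (n := 2) (by norm_num) |>.mp h2
    have hIm0' : Im = 0 := by
      rw [hImdef]
      exact integral_eq_zero_of_ae (by filter_upwards [hae] with ω hω; simp [hω])
    have haei : ∀ i : Fin n, ∀ᵐ ω ∂μ, M' (x i ω) = 0 := by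
      intro i
      have hset : MeasurableSet {e | M' e ≠ 0} :=
        (hM'meas (measurableSet_singleton 0)).compl
      rw [ae_iff]
      have hpre : {ω | ¬M' (x i ω) = 0} = (x i) ⁻¹' {e | M' e ≠ 0} := rfl
      rw [hpre, ← Measure.map_apply (hmeas i) hset, (hident i).map_eq,
        Measure.map_apply hmeas₀ hset]
      exact ae_iff.mp hae
    have hglobal : ∀ᵐ ω ∂μ, ∀ i, M' (x i ω) = 0 := ae_all_iff.mpr haei
    have hle : {ω | ε ≤ ⨆ ξ ∈ Metric.closedBall ξ₀ C,
          |(1 / (n : ℝ)) * ∑ i, h ξ (x i ω) - Eh ξ|}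
        ≤ᵐ[μ] {ω | ε ≤ |(1 / (n : ℝ)) * ∑ i, h ξ₀ (x i ω) - Eh ξ₀|} := by
      filter_upwards [hglobal] with ω hz hω
      refine le_trans hω (Real.iSup_le (fun ξ => ?_) (abs_nonneg _))
      by_cases hξ : ξ ∈ Metric.closedBall ξ₀ C
      · haveI : Nonempty (ξ ∈ Metric.closedBall ξ₀ C) := ⟨hξ⟩
        rw [ciSup_const]
        have hsum : ∑ i, h ξ (x i ω) = ∑ i, h ξ₀ (x i ω) := by
          refine Finset.sum_congr rfl (fun i _ => ?_)
          have hl := hM'lip ξ hξ ξ₀ hξ₀mem (x i ω)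
          rw [hz i, zero_mul] at hl
          have habs : |h ξ (x i ω) - h ξ₀ (x i ω)| = 0 :=
            le_antisymm hl (abs_nonneg _)
          linarith [sub_eq_zero.mp (abs_eq_zero.mp habs)]
        have hEheq : Eh ξ = Eh ξ₀ := by
          have hl := hEhLip ξ hξ ξ₀ hξ₀mem
          rw [hIm0', zero_mul] at hl
          have habs : |Eh ξ - Eh ξ₀| = 0 := le_antisymm hl (abs_nonneg _)
          linarith [sub_eq_zero.mp (abs_eq_zero.mp habs)]
        rw [hsum, hEheq]
      · exact Real.iSup_le (fun hm => absurd hm hξ) (abs_nonneg _)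
    exact (measure_mono_ae hle).trans single_final
  -- main case : VM > 0
  have hVMpos : 0 < VM := lt_of_le_of_ne hVM0 (Ne.symm hVMz)
  have hsqVM : 0 < Real.sqrt VM := Real.sqrt_pos.mpr hVMpos
  set r : ℝ := ε * δ / (8 * Real.sqrt VM * Real.sqrt d) with hrdef
  have hrpos : 0 < r := by positivity
  obtain ⟨T, hT1, hT2, hT3⟩ := exists_net d ξ₀ C r hC hrpos
  have hLr : 1 + 2 * C / r = L := by
    rw [hLdef, hrdef]
    field_simp
    ring
  -- the two bad events
  set B : Set Ω := ⋃ t ∈ T, {ω | ε / 2 ≤ |(1 / (n : ℝ)) * ∑ i, h t (x i ω) - Eh t|}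
    with hBdef
  set Cev : Set Ω := {ω | ε / (4 * r) ≤ (1 / (n : ℝ)) * ∑ i, M' (x i ω)} with hCevdef
  -- inclusion
  have hAsub : {ω | ε ≤ ⨆ ξ ∈ Metric.closedBall ξ₀ C,
        |(1 / (n : ℝ)) * ∑ i, h ξ (x i ω) - Eh ξ|} ⊆ B ∪ Cev := by
    intro ω hω
    by_contra hcon
    rw [Set.mem_union] at hcon
    push_neg at hcon
    obtain ⟨hnB, hnC⟩ := hcon
    have hCbound : (1 / (n : ℝ)) * ∑ i, M' (x i ω) < ε / (4 * r) := by
      by_contra hc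
      exact hnC (by rw [hCevdef]; exact Set.mem_setOf_eq ▸ not_lt.mp hc)
    have hBbound : ∀ t ∈ T, |(1 / (n : ℝ)) * ∑ i, h t (x i ω) - Eh t| < ε / 2 := by
      intro t ht
      by_contra hc
      refine hnB ?_
      rw [hBdef]
      refine Set.mem_biUnion ht ?_
      exact Set.mem_setOf_eq ▸ not_lt.mp hc
    have hImr : Im * r ≤ ε / 8 := by
      have h1 : Real.sqrt VM * r = ε * δ / (8 * Real.sqrt d) := by
        rw [hrdef]; field_simp
      have h2 : ε * δ / (8 * Real.sqrt d) ≤ ε / 8 := by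
        rw [div_le_div_iff₀ (by positivity) (by norm_num : (0:ℝ) < 8)]
        nlinarith
      have h3 : Im * r ≤ Real.sqrt VM * r :=
        mul_le_mul_of_nonneg_right hImle hrpos.le
      linarith
    have hsup : (⨆ ξ ∈ Metric.closedBall ξ₀ C,
        |(1 / (n : ℝ)) * ∑ i, h ξ (x i ω) - Eh ξ|) ≤ 7 * ε / 8 := by
      refine Real.iSup_le (fun ξ => ?_) (by positivity)
      by_cases hξ : ξ ∈ Metric.closedBall ξ₀ C
      · haveI : Nonempty (ξ ∈ Metric.closedBall ξ₀ C) := ⟨hξ⟩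
        rw [ciSup_const]
        obtain ⟨t, htT, hdist⟩ := hT2 ξ hξ
        have hnorm_le : ‖ξ - t‖ ≤ r := by rwa [← dist_eq_norm]
        have p1 : |(1 / (n : ℝ)) * ∑ i, h ξ (x i ω)
            - (1 / (n : ℝ)) * ∑ i, h t (x i ω)|
            ≤ ((1 / (n : ℝ)) * ∑ i, M' (x i ω)) * r := by
          rw [← mul_sub, ← Finset.sum_sub_distrib, abs_mul,
            abs_of_pos (by positivity : (0:ℝ) < 1 / (n:ℝ))]
          rw [mul_assoc]
          refine mul_le_mul_of_nonneg_left ?_ (by positivity)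
          calc |∑ i, (h ξ (x i ω) - h t (x i ω))|
              ≤ ∑ i, |h ξ (x i ω) - h t (x i ω)| := Finset.abs_sum_le_sum_abs _ _
            _ ≤ ∑ i, M' (x i ω) * r := by
                refine Finset.sum_le_sum (fun i _ => ?_)
                refine (hM'lip ξ hξ t (hT1 t htT) (x i ω)).trans ?_
                exact mul_le_mul_of_nonneg_left hnorm_le (hM'0 _)
            _ = (∑ i, M' (x i ω)) * r := by rw [Finset.sum_mul]
        have p1' : |(1 / (n : ℝ)) * ∑ i, h ξ (x i ω)
            - (1 / (n : ℝ)) * ∑ i, h t (x i ω)| < ε / 4 := by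
          have hmul : ((1 / (n : ℝ)) * ∑ i, M' (x i ω)) * r < (ε / (4 * r)) * r :=
            mul_lt_mul_of_pos_right hCbound hrpos
          have hre : (ε / (4 * r)) * r = ε / 4 := by field_simp
          linarith
        have p2 : |Eh t - Eh ξ| ≤ ε / 8 := by
          rw [abs_sub_comm]
          have hl := hEhLip ξ hξ t (hT1 t htT)
          have h4 : Im * ‖ξ - t‖ ≤ Im * r := mul_le_mul_of_nonneg_left hnorm_le hIm0
          linarith
        have p3 := hBbound t htT
        have tri : |(1 / (n : ℝ)) * ∑ i, h ξ (x i ω) - Eh ξ|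
            ≤ |(1 / (n : ℝ)) * ∑ i, h ξ (x i ω) - (1 / (n : ℝ)) * ∑ i, h t (x i ω)|
              + |(1 / (n : ℝ)) * ∑ i, h t (x i ω) - Eh t| + |Eh t - Eh ξ| := by
          have e1 : (1 / (n : ℝ)) * ∑ i, h ξ (x i ω) - Eh ξ
              = ((1 / (n : ℝ)) * ∑ i, h ξ (x i ω) - (1 / (n : ℝ)) * ∑ i, h t (x i ω))
                + ((1 / (n : ℝ)) * ∑ i, h t (x i ω) - Eh t) + (Eh t - Eh ξ) := by ring
          rw [e1]
          exact (abs_add_le _ _).trans (add_le_add_left (abs_add_le _ _) _)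
        linarith
      · exact Real.iSup_le (fun hm => absurd hm hξ) (by positivity)
    simp only [Set.mem_setOf_eq] at hω
    linarith
  -- bound on μ Cev (Markov)
  have hμC : μ Cev ≤ ENNReal.ofReal (δ / 2) := by
    have hcpos : (0:ℝ) < ε / (4 * r) := by positivity
    have hfmeas : Measurable fun ω =>
        ENNReal.ofReal ((1 / (n : ℝ)) * ∑ i, M' (x i ω)) :=
      (measurable_const.mul
        (Finset.measurable_sum _ (fun i _ => hM'meas.comp (hmeas i)))).ennreal_ofReal
    have hlint : ∫⁻ ω, ENNReal.ofReal ((1 / (n : ℝ)) * ∑ i, M' (x i ω)) ∂μ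
        = ENNReal.ofReal Im := by
      have heq : (fun ω => ENNReal.ofReal ((1 / (n : ℝ)) * ∑ i, M' (x i ω)))
          = fun ω => ENNReal.ofReal (1 / (n : ℝ)) * ∑ i, ENNReal.ofReal (M' (x i ω)) := by
        funext ω
        rw [ENNReal.ofReal_mul (by positivity),
          ENNReal.ofReal_sum_of_nonneg (fun i _ => hM'0 _)]
      have hmi : ∀ i : Fin n, Measurable fun ω => ENNReal.ofReal (M' (x i ω)) :=
        fun i => ((hM'meas.comp (hmeas i) :
          Measurable fun ω => M' (x i ω))).ennreal_ofReal
      have hmsum : Measurable fun ω => ∑ i, ENNReal.ofReal (M' (x i ω)) :=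
        Finset.measurable_sum _ (fun i _ => hmi i)
      rw [heq, lintegral_const_mul _ hmsum]
      rw [lintegral_finset_sum _ (fun i _ => hmi i)]
      have hs : ∑ i : Fin n, ∫⁻ ω, ENNReal.ofReal (M' (x i ω)) ∂μ
          = (n : ℝ≥0∞) * ENNReal.ofReal Im := by
        rw [Finset.sum_congr rfl (fun i _ => hlint_i i), Finset.sum_const,
          Finset.card_univ, Fintype.card_fin, nsmul_eq_mul]
      rw [hs, ← mul_assoc]
      have hne : ((n : ℝ≥0∞)) = ENNReal.ofReal (n : ℝ) := by
        rw [ENNReal.ofReal_natCast]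
      rw [hne, ← ENNReal.ofReal_mul (by positivity)]
      have hinv : (1 / (n : ℝ)) * (n : ℝ) = 1 := by
        field_simp
      rw [hinv, ENNReal.ofReal_one, one_mul]
    have hsub : Cev ⊆ {ω | ENNReal.ofReal (ε / (4 * r))
        ≤ ENNReal.ofReal ((1 / (n : ℝ)) * ∑ i, M' (x i ω))} := by
      intro ω hω
      exact ENNReal.ofReal_le_ofReal hω
    calc μ Cev ≤ μ {ω | ENNReal.ofReal (ε / (4 * r))
          ≤ ENNReal.ofReal ((1 / (n : ℝ)) * ∑ i, M' (x i ω))} := measure_mono hsub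
      _ ≤ (∫⁻ ω, ENNReal.ofReal ((1 / (n : ℝ)) * ∑ i, M' (x i ω)) ∂μ)
          / ENNReal.ofReal (ε / (4 * r)) :=
          meas_ge_le_lintegral_div hfmeas.aemeasurable
            (ENNReal.ofReal_pos.mpr hcpos).ne' ENNReal.ofReal_ne_top
      _ = ENNReal.ofReal Im / ENNReal.ofReal (ε / (4 * r)) := by rw [hlint]
      _ = ENNReal.ofReal (Im / (ε / (4 * r))) :=
          (ENNReal.ofReal_div_of_pos hcpos).symm
      _ ≤ ENNReal.ofReal (δ / 2) := by
          apply ENNReal.ofReal_le_ofReal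
          rw [div_le_iff₀ hcpos]
          have hεr : ε / (4 * r) = 2 * Real.sqrt VM * Real.sqrt d / δ := by
            rw [hrdef]; field_simp; ring
          rw [hεr]
          have hgoal : δ / 2 * (2 * Real.sqrt VM * Real.sqrt d / δ)
              = Real.sqrt VM * Real.sqrt d := by field_simp
          rw [hgoal]
          nlinarith
  -- bound on μ B (union bound + Chernoff)
  have hμB : μ B ≤ ENNReal.ofReal (2 * Real.exp ((d : ℝ) * Real.log L
      - (n : ℝ) * ε ^ 2 / (8 * (σ ^ 2 + ε * τ)))) := by
    set E2 : ℝ := 2 * Real.exp (-(n : ℝ) * (ε / 2) ^ 2 / (2 * (σ ^ 2 + (ε / 2) * τ)))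
      with hE2def
    have hE2pos : 0 < E2 := by positivity
    have hTcard : (T.card : ℝ) ≤ L ^ d := by rw [← hLr]; exact hT3
    have step1 : μ B ≤ (T.card : ℝ≥0∞) * ENNReal.ofReal E2 := by
      calc μ B ≤ ∑ t ∈ T, μ {ω | ε / 2 ≤ |(1 / (n : ℝ)) * ∑ i, h t (x i ω) - Eh t|} :=
            measure_biUnion_finset_le T _
        _ ≤ ∑ _t ∈ T, ENNReal.ofReal E2 := by
            refine Finset.sum_le_sum (fun t ht => ?_)
            exact chern t (hT1 t ht) (ε / 2) (by positivity)
        _ = (T.card : ℝ≥0∞) * ENNReal.ofReal E2 := by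
            rw [Finset.sum_const, nsmul_eq_mul]
    have step2 : (T.card : ℝ≥0∞) * ENNReal.ofReal E2
        = ENNReal.ofReal ((T.card : ℝ) * E2) := by
      rw [ENNReal.ofReal_mul (Nat.cast_nonneg _), ENNReal.ofReal_natCast]
    have step3 : (T.card : ℝ) * E2 ≤ L ^ d * E2 :=
      mul_le_mul_of_nonneg_right hTcard hE2pos.le
    have step4 : L ^ d * E2 ≤ 2 * Real.exp ((d : ℝ) * Real.log L
        - (n : ℝ) * ε ^ 2 / (8 * (σ ^ 2 + ε * τ))) := by
      have hLd : L ^ d = Real.exp ((d : ℝ) * Real.log L) := by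
        rw [Real.exp_nat_mul, Real.exp_log hLpos]
      rw [hLd, hE2def]
      rw [show Real.exp ((d:ℝ) * Real.log L)
          * (2 * Real.exp (-(n : ℝ) * (ε / 2) ^ 2 / (2 * (σ ^ 2 + (ε / 2) * τ))))
          = 2 * Real.exp ((d:ℝ) * Real.log L
            + -(n : ℝ) * (ε / 2) ^ 2 / (2 * (σ ^ 2 + (ε / 2) * τ))) by
        rw [Real.exp_add]; ring]
      have hexple : -(n : ℝ) * (ε / 2) ^ 2 / (2 * (σ ^ 2 + (ε / 2) * τ))
          ≤ -((n : ℝ) * ε ^ 2 / (8 * (σ ^ 2 + ε * τ))) := by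
        have hd1 : (0:ℝ) < 2 * (σ ^ 2 + (ε / 2) * τ) := by
          nlinarith [pow_pos hσ 2, mul_nonneg (half_pos hε).le hτ0]
        rw [neg_mul, neg_div, neg_le_neg_iff]
        rw [div_le_div_iff₀ (by positivity) hd1]
        nlinarith [mul_nonneg (mul_nonneg (Nat.cast_nonneg n)
          (pow_pos hε 3).le) hτ0]
      have hmono := Real.exp_le_exp.mpr (add_le_add_right hexple ((d:ℝ) * Real.log L))
      have heq : (d:ℝ) * Real.log L + -((n : ℝ) * ε ^ 2 / (8 * (σ ^ 2 + ε * τ)))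
          = (d:ℝ) * Real.log L - (n : ℝ) * ε ^ 2 / (8 * (σ ^ 2 + ε * τ)) := by ring
      rw [heq] at hmono
      linarith
    calc μ B ≤ (T.card : ℝ≥0∞) * ENNReal.ofReal E2 := step1
      _ = ENNReal.ofReal ((T.card : ℝ) * E2) := step2
      _ ≤ ENNReal.ofReal (2 * Real.exp ((d : ℝ) * Real.log L
          - (n : ℝ) * ε ^ 2 / (8 * (σ ^ 2 + ε * τ)))) :=
          ENNReal.ofReal_le_ofReal (step3.trans step4)
  -- combine
  calc μ {ω | ε ≤ ⨆ ξ ∈ Metric.closedBall ξ₀ C,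
        |(1 / (n : ℝ)) * ∑ i, h ξ (x i ω) - Eh ξ|}
      ≤ μ (B ∪ Cev) := measure_mono hAsub
    _ ≤ μ B + μ Cev := measure_union_le _ _
    _ ≤ ENNReal.ofReal (2 * Real.exp ((d : ℝ) * Real.log L
          - (n : ℝ) * ε ^ 2 / (8 * (σ ^ 2 + ε * τ)))) + ENNReal.ofReal (δ / 2) :=
        add_le_add hμB hμC
    _ = ENNReal.ofReal (δ / 2 + 2 * Real.exp ((d : ℝ) * Real.log L
          - (n : ℝ) * ε ^ 2 / (8 * (σ ^ 2 + ε * τ)))) := by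
        rw [← ENNReal.ofReal_add (by positivity) (by positivity), add_comm]
end

section
/- Moment generating function control: Let U, V be random variables with |U| ≤ V almost surely, and suppose there exist σ > 0, 0 < t₀ ≤ +∞, and c ≥ 1 such that E[exp(tV)] ≤ c·exp(σ²t²/2) for all 0 ≤ t < t₀. Then E[exp(t(U − E[U]))] ≤ exp( e·c²·(σ² + 1/t₀²)·t² ) for all |t| < t₀. -/
open scoped ENNReal
open MeasureTheory


/-- For `z ≤ 0`: `exp z ≤ 1 + z + z²/2`. -/
lemma exp_le_quadratic_of_nonpos {z : ℝ} (hz : z ≤ 0) : Real.exp z ≤ 1 + z + z ^ 2 / 2 := by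
  set w : ℝ := -z with hw
  have hw0 : 0 ≤ w := by simp [hw]; linarith
  have hq : 1 + w + w ^ 2 / 2 ≤ Real.exp w := Real.quadratic_le_exp_of_nonneg hw0
  have hpos : (0:ℝ) < 1 - w + w ^ 2 / 2 := by nlinarith [sq_nonneg (w - 1)]
  have h1 : 1 ≤ Real.exp w * (1 - w + w ^ 2 / 2) := by
    nlinarith [mul_le_mul_of_nonneg_right hq hpos.le, sq_nonneg (w ^ 2)]
  have hz' : z = -w := by simp [hw]
  rw [hz', Real.exp_neg]
  rw [inv_le_iff_one_le_mul₀ (Real.exp_pos w)] at *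
  · nlinarith [h1]

/-- Key pointwise bound: `exp z ≤ 1 + z + z²/2 · exp |z|`. -/
lemma exp_le_one_add_add (z : ℝ) : Real.exp z ≤ 1 + z + z ^ 2 / 2 * Real.exp |z| := by
  rcases le_or_gt z 0 with hz | hz
  · have h1 := exp_le_quadratic_of_nonpos hz
    have h2 : (1:ℝ) ≤ Real.exp |z| := by
      rw [Real.one_le_exp_iff]; positivity
    nlinarith [sq_nonneg z]
  · rw [abs_of_pos hz]
    have hlow : 1 + z + z ^ 2 / 2 ≤ Real.exp z := Real.quadratic_le_exp_of_nonneg hz.le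
    rcases le_or_gt z 1 with h1 | h1
    · have hb := Real.exp_bound' hz.le h1 (n := 3) (by norm_num)
      have hb' : Real.exp z ≤ 1 + z + z ^ 2 / 2 + 2 / 9 * z ^ 3 := by
        have : (∑ m ∈ Finset.range 3, z ^ m / m.factorial) = 1 + z + z ^ 2 / 2 := by
          simp [Finset.sum_range_succ, Nat.factorial]
        rw [this] at hb
        norm_num [Nat.factorial] at hb
        nlinarith [hb]
      nlinarith [hb', hlow, pow_nonneg hz.le 3, sq_nonneg z, mul_pos hz hz]
    · -- z > 1
      rcases le_or_gt (z^2) 2 with h2 | h2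
      · have hz32 : z ≤ 3 / 2 := by nlinarith
        rcases le_or_gt z (6/5) with h3 | h3
        · -- exp z ≤ exp (6/5) ≤ 3.33
          have he6 : Real.exp (6/5) ≤ 3.33 := by
            have h5 : (Real.exp (6/5)) ^ 5 = Real.exp 6 := by
              rw [← Real.exp_nat_mul]; norm_num
            have h6 : Real.exp 6 = (Real.exp 1) ^ 6 := by
              rw [← Real.exp_nat_mul]; norm_num
            have hlt : (Real.exp (6/5)) ^ 5 < (3.33:ℝ) ^ 5 := by
              rw [h5, h6]
              calc (Real.exp 1) ^ 6 ≤ (2.7182818286:ℝ) ^ 6 := by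
                    exact pow_le_pow_left₀ (Real.exp_pos 1).le Real.exp_one_lt_d9.le 6
                _ < (3.33:ℝ) ^ 5 := by norm_num
            have := lt_of_pow_lt_pow_left₀ 5 (by norm_num : (0:ℝ) ≤ 3.33) hlt
            linarith
          have hez : Real.exp z ≤ 3.33 := le_trans (Real.exp_le_exp.mpr h3) he6
          nlinarith [Real.exp_pos z, hez, hlow]
        · -- 6/5 < z ≤ 3/2
          have he32 : Real.exp (3/2 : ℝ) ≤ 4.49 := by
            have h5 : (Real.exp (3/2:ℝ)) ^ 2 = Real.exp 3 := by
              rw [← Real.exp_nat_mul]; norm_num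
            have h6 : Real.exp 3 = (Real.exp 1) ^ 3 := by
              rw [← Real.exp_nat_mul]; norm_num
            have hlt : (Real.exp (3/2:ℝ)) ^ 2 < (4.49:ℝ) ^ 2 := by
              rw [h5, h6]
              calc (Real.exp 1) ^ 3 ≤ (2.7182818286:ℝ) ^ 3 := by
                    exact pow_le_pow_left₀ (Real.exp_pos 1).le Real.exp_one_lt_d9.le 3
                _ < (4.49:ℝ) ^ 2 := by norm_num
            have := lt_of_pow_lt_pow_left₀ 2 (by norm_num : (0:ℝ) ≤ 4.49) hlt
            linarith
          have hez : Real.exp z ≤ 4.49 := le_trans (Real.exp_le_exp.mpr hz32) he32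
          nlinarith [Real.exp_pos z, hez]
      · -- z² > 2 : RHS has z²/2·exp z ≥ exp z
        have : Real.exp z ≤ z ^ 2 / 2 * Real.exp z := by
          nlinarith [Real.exp_pos z]
        nlinarith [this]

/-- `u² ≤ 4/(e²δ²) · exp (δu)` for `u ≥ 0`, `δ > 0`. -/
lemma sq_le_exp_aux {δ u : ℝ} (hδ : 0 < δ) (hu : 0 ≤ u) :
    u ^ 2 ≤ 4 / (Real.exp 1 ^ 2 * δ ^ 2) * Real.exp (δ * u) := by
  have h1 : δ * u / 2 - 1 + 1 ≤ Real.exp (δ * u / 2 - 1) := Real.add_one_le_exp _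
  have h2 : Real.exp (δ * u / 2 - 1) ^ 2 * Real.exp 1 ^ 2 = Real.exp (δ * u) := by
    rw [← Real.exp_nat_mul, ← Real.exp_nat_mul, ← Real.exp_add]
    congr 1
    push_cast
    ring
  have hy : 0 < Real.exp (δ * u / 2 - 1) := Real.exp_pos _
  have h3 : (δ * u) ^ 2 ≤ 4 * Real.exp (δ * u / 2 - 1) ^ 2 := by
    nlinarith [mul_nonneg hδ.le hu]
  have he : 0 < Real.exp 1 ^ 2 := by positivity
  rw [div_mul_eq_mul_div, le_div_iff₀ (by positivity)]
  nlinarith [mul_le_mul_of_nonneg_right h3 he.le, h2, sq_nonneg u]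

/-- Core numeric inequality for the large-|t| regime. -/
lemma core_poly (u : ℝ) :
    u ^ 2 ≤ (11/25) ^ 2 * (2.7182818283 * (1 + u ^ 2 + u ^ 4 / 2) - 1) := by
  nlinarith [sq_nonneg (u ^ 2 - 9/10), sq_nonneg (u ^ 2 - 1), sq_nonneg u, sq_nonneg (u^2)]

/-- Numeric inequality for the small-|t| regime. -/
lemma small_denom {ρ δ P E : ℝ} (hρ : 0 < ρ) (hδ : 0 < δ) (hδρ : δ * ρ = 11/20)
    (hP : ρ ^ 2 ≤ P) (hE : 2.7182818283 ≤ E) : 4 / (E ^ 2 * δ ^ 2) ≤ 2 * P := by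
  have hE0 : (0:ℝ) < E := by linarith
  have hE2 : (7.389:ℝ) ≤ E ^ 2 := by nlinarith
  have hδρ2 : δ ^ 2 * ρ ^ 2 = (121:ℝ)/400 := by rw [← mul_pow, hδρ]; norm_num
  rw [div_le_iff₀ (by positivity)]
  have c1 : 2 * (ρ ^ 2) * (E ^ 2 * δ ^ 2) ≤ 2 * P * (E ^ 2 * δ ^ 2) := by
    apply mul_le_mul_of_nonneg_right _ (by positivity)
    linarith
  have c2 : 2 * (ρ ^ 2) * (E ^ 2 * δ ^ 2) = 2 * E ^ 2 * (121/400) := by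
    linear_combination (2 * E ^ 2) * hδρ2
  have c3 : (4:ℝ) ≤ 2 * E ^ 2 * (121/400) := by linarith
  linarith

set_option maxHeartbeats 1000000 in

/-- **Moment generating function control.**
If `|U| ≤ V` almost surely and `E[exp(tV)] ≤ c·exp(σ²t²/2)` for `0 ≤ t < t₀` (with
`c ≥ 1`), then `E[exp(t(U − E[U]))] ≤ exp(e·c²·(σ² + 1/t₀²)·t²)` for all `|t| < t₀`.
(The convention `1/t₀² = 0` for `t₀ = ∞` is realized via `t₀⁻¹.toReal`.) -/
theorem mgf_control
    {Ω : Type*} [MeasurableSpace Ω] (μ : Measure Ω) [IsProbabilityMeasure μ]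
    (U V : Ω → ℝ) (hU : Measurable U) (hV : Measurable V)
    (hUV : ∀ᵐ ω ∂μ, |U ω| ≤ V ω)
    (σ : ℝ) (hσ : 0 < σ) (t₀ : ℝ≥0∞) (ht₀ : 0 < t₀) (c : ℝ) (hc : 1 ≤ c)
    (hmgfV : ∀ t : ℝ, 0 ≤ t → ENNReal.ofReal t < t₀ →
      ∫⁻ ω, ENNReal.ofReal (Real.exp (t * V ω)) ∂μ
        ≤ ENNReal.ofReal (c * Real.exp (σ ^ 2 * t ^ 2 / 2))) :
    ∀ t : ℝ, ENNReal.ofReal |t| < t₀ →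
      ∫⁻ ω, ENNReal.ofReal (Real.exp (t * (U ω - ∫ ω', U ω' ∂μ))) ∂μ
        ≤ ENNReal.ofReal
            (Real.exp (Real.exp 1 * c ^ 2 * (σ ^ 2 + t₀⁻¹.toReal ^ 2) * t ^ 2)) := by
  intro t ht
  have hc0 : (0:ℝ) < c := by linarith
  set τ : ℝ := t₀⁻¹.toReal with hτdef
  have hτ0 : 0 ≤ τ := ENNReal.toReal_nonneg
  set ρ : ℝ := max σ τ with hρdef
  have hρ0 : 0 < ρ := lt_of_lt_of_le hσ (le_max_left _ _)
  have hσρ : σ ≤ ρ := le_max_left _ _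
  have hτρ : τ ≤ ρ := le_max_right _ _
  have hρ2 : ρ ^ 2 ≤ σ ^ 2 + τ ^ 2 := by
    rcases max_cases σ τ with ⟨h1, _⟩ | ⟨h1, _⟩ <;> rw [hρdef, h1] <;>
      linarith only [sq_nonneg σ, sq_nonneg τ]
  -- membership criterion for `(0, t₀)`
  have ht0of : ∀ a : ℝ, 0 ≤ a → a * τ < 1 → ENNReal.ofReal a < t₀ := by
    intro a ha haτ
    by_cases htop : t₀ = ∞
    · rw [htop]; exact ENNReal.ofReal_lt_top
    · have htr : 0 < t₀.toReal := ENNReal.toReal_pos ht₀.ne' htop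
      have hτeq : τ = (t₀.toReal)⁻¹ := by rw [hτdef, ← ENNReal.toReal_inv]
      have : a < t₀.toReal := by
        rw [hτeq] at haτ
        by_contra hcon
        push_neg at hcon
        have : (1:ℝ) ≤ a * (t₀.toReal)⁻¹ := by
          rw [← mul_inv_cancel₀ htr.ne']
          exact mul_le_mul_of_nonneg_right hcon (by positivity)
        linarith
      calc ENNReal.ofReal a < ENNReal.ofReal t₀.toReal :=
            ENNReal.ofReal_lt_ofReal_iff htr |>.mpr this
        _ = t₀ := ENNReal.ofReal_toReal htop
  set s : ℝ := |t| with hsdef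
  have hs0 : 0 ≤ s := abs_nonneg t
  have hts : t ^ 2 = s ^ 2 := (sq_abs t).symm
  -- nonnegativity of V
  have hV0 : ∀ᵐ ω ∂μ, 0 ≤ V ω := hUV.mono fun ω h => le_trans (abs_nonneg _) h
  -- integrability of exp (b * V)
  have hIntExp : ∀ b : ℝ, 0 ≤ b → ENNReal.ofReal b < t₀ →
      Integrable (fun ω => Real.exp (b * V ω)) μ := by
    intro b hb hbt
    refine ⟨(Real.measurable_exp.comp (hV.const_mul b)).aestronglyMeasurable, ?_⟩
    rw [hasFiniteIntegral_iff_ofReal (Filter.Eventually.of_forall fun ω => (Real.exp_pos _).le)]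
    exact lt_of_le_of_lt (hmgfV b hb hbt) ENNReal.ofReal_lt_top
  -- real mgf bound
  have hmgfR : ∀ b : ℝ, 0 ≤ b → ENNReal.ofReal b < t₀ →
      ∫ ω, Real.exp (b * V ω) ∂μ ≤ c * Real.exp (σ ^ 2 * b ^ 2 / 2) := by
    intro b hb hbt
    have h1 := MeasureTheory.ofReal_integral_eq_lintegral_ofReal (hIntExp b hb hbt)
      (Filter.Eventually.of_forall fun ω => (Real.exp_pos _).le)
    have h2 : ENNReal.ofReal (∫ ω, Real.exp (b * V ω) ∂μ)
        ≤ ENNReal.ofReal (c * Real.exp (σ ^ 2 * b ^ 2 / 2)) := by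
      rw [h1]; exact hmgfV b hb hbt
    exact (ENNReal.ofReal_le_ofReal_iff (by positivity)).mp h2
  -- basic integrabilities
  set b₀ : ℝ := (11/25) / ρ with hb₀def
  have hb₀ : 0 < b₀ := by positivity
  have hb₀t : ENNReal.ofReal b₀ < t₀ := by
    refine ht0of b₀ hb₀.le ?_
    have : b₀ * τ ≤ b₀ * ρ := mul_le_mul_of_nonneg_left hτρ hb₀.le
    have hbr : b₀ * ρ = 11/25 := by rw [hb₀def, div_mul_cancel₀ _ hρ0.ne']
    linarith
  have hIntV : Integrable V μ := by
    refine Integrable.mono' ((hIntExp b₀ hb₀.le hb₀t).const_mul (1/b₀))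
      hV.aestronglyMeasurable ?_
    filter_upwards [hV0] with ω h
    rw [Real.norm_eq_abs, abs_of_nonneg h]
    rw [one_div, inv_mul_eq_div, le_div_iff₀ hb₀]
    have h2 := Real.add_one_le_exp (b₀ * V ω)
    linarith only [h2]
  have hIntU : Integrable U μ := by
    refine hIntV.mono' hU.aestronglyMeasurable ?_
    filter_upwards [hUV] with ω h
    rwa [Real.norm_eq_abs]
  set m : ℝ := ∫ ω, V ω ∂μ with hmdef
  have hm0 : 0 ≤ m := integral_nonneg_of_ae hV0
  set EU : ℝ := ∫ ω', U ω' ∂μ with hEUdef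
  have hEUm : |EU| ≤ m := by
    have h1 : ‖∫ ω', U ω' ∂μ‖ ≤ ∫ ω, ‖U ω‖ ∂μ := norm_integral_le_integral_norm U
    simp only [Real.norm_eq_abs] at h1
    calc |EU| ≤ ∫ ω, |U ω| ∂μ := h1
      _ ≤ m := integral_mono_ae hIntU.abs hIntV hUV
  -- Jensen : exp (b m) ≤ mgf
  have hJ : ∀ b : ℝ, 0 ≤ b → ENNReal.ofReal b < t₀ →
      Real.exp (b * m) ≤ c * Real.exp (σ ^ 2 * b ^ 2 / 2) := by
    intro b hb hbt
    have hptw : ∀ᵐ ω ∂μ, Real.exp (b * m) * (1 + (b * V ω - b * m))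
        ≤ Real.exp (b * V ω) := by
      filter_upwards with ω
      have h1 := Real.add_one_le_exp (b * V ω - b * m)
      have h2 : Real.exp (b * m) * Real.exp (b * V ω - b * m) = Real.exp (b * V ω) := by
        rw [← Real.exp_add]; ring_nf
      have h3 := mul_le_mul_of_nonneg_left h1 (Real.exp_pos (b * m)).le
      rw [h2] at h3
      linarith only [h3]
    have hintsub : Integrable (fun ω => b * V ω - b * m) μ :=
      (hIntV.const_mul b).sub (integrable_const (b * m))
    have hint1 : Integrable (fun ω => Real.exp (b * m) * (1 + (b * V ω - b * m))) μ := by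
      apply Integrable.const_mul
      exact (integrable_const 1).add hintsub
    have h3 := integral_mono_ae hint1 (hIntExp b hb hbt) hptw
    have h4 : ∫ ω, Real.exp (b * m) * (1 + (b * V ω - b * m)) ∂μ = Real.exp (b * m) := by
      rw [integral_const_mul]
      have heq : ∫ ω, (1 + (b * V ω - b * m)) ∂μ
          = 1 + (b * m - b * m) := by
        rw [integral_add (integrable_const 1) hintsub,
          integral_sub (hIntV.const_mul b) (integrable_const (b * m)),
          integral_const_mul, integral_const, integral_const]
        simp [hmdef]
      rw [heq]; ring_nf
    rw [h4] at h3
    exact le_trans h3 (hmgfR b hb hbt)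
  have hbm : ∀ b : ℝ, 0 ≤ b → ENNReal.ofReal b < t₀ →
      b * m ≤ Real.log c + σ ^ 2 * b ^ 2 / 2 := by
    intro b hb hbt
    have h1 := hJ b hb hbt
    have h2 : c * Real.exp (σ ^ 2 * b ^ 2 / 2)
        = Real.exp (Real.log c + σ ^ 2 * b ^ 2 / 2) := by
      rw [Real.exp_add, Real.exp_log hc0]
    rw [h2] at h1
    exact Real.exp_le_exp.mp h1
  set L : ℝ := Real.log c with hLdef
  have hL0 : 0 ≤ L := Real.log_nonneg hc
  have hcL : c = Real.exp L := (Real.exp_log hc0).symm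
  have hst : ENNReal.ofReal s < t₀ := ht
  -- integrability of the target exponential
  have hXbound : ∀ᵐ ω ∂μ, |t * (U ω - EU)| ≤ s * (V ω + m) := by
    filter_upwards [hUV] with ω h
    rw [abs_mul, ← hsdef]
    have h1 : |U ω - EU| ≤ V ω + m := by
      calc |U ω - EU| ≤ |U ω| + |EU| := abs_sub _ _
        _ ≤ V ω + m := add_le_add h hEUm
    exact mul_le_mul_of_nonneg_left h1 hs0
  have hIntT : Integrable (fun ω => Real.exp (t * (U ω - EU))) μ := by
    refine Integrable.mono' (((hIntExp s hs0 hst).const_mul (Real.exp (s * m))))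
      ((Real.measurable_exp.comp ((hU.sub measurable_const).const_mul t)).aestronglyMeasurable) ?_
    filter_upwards [hXbound] with ω h
    rw [Real.norm_eq_abs, abs_of_pos (Real.exp_pos _), ← Real.exp_add]
    apply Real.exp_le_exp.mpr
    calc t * (U ω - EU) ≤ |t * (U ω - EU)| := le_abs_self _
      _ ≤ s * (V ω + m) := h
      _ = s * m + s * V ω := by ring
  -- rewrite the goal in terms of a real integral
  rw [← MeasureTheory.ofReal_integral_eq_lintegral_ofReal hIntT
    (Filter.Eventually.of_forall fun ω => (Real.exp_pos _).le)]
  apply ENNReal.ofReal_le_ofReal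
  -- now a purely real goal
  by_cases hreg : s ≤ (11/25) / ρ
  · -- small regime
    obtain ⟨δ, hδdef⟩ : ∃ x : ℝ, x = (11/20) / ρ := ⟨_, rfl⟩
    have hδ0 : 0 < δ := by rw [hδdef]; positivity
    have hδρ : δ * ρ = 11/20 := by rw [hδdef]; exact div_mul_cancel₀ _ hρ0.ne'
    obtain ⟨a, hadef⟩ : ∃ x : ℝ, x = s + δ := ⟨_, rfl⟩
    have ha0 : 0 ≤ a := by rw [hadef]; linarith only [hs0, hδ0]
    have hsρ' : s * ρ ≤ 11/25 := (le_div_iff₀ hρ0).mp hreg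
    have haρ : a * ρ ≤ 99/100 := by
      have h2 : a * ρ = s * ρ + δ * ρ := by rw [hadef]; ring
      rw [h2, hδρ]; linarith only [hsρ']
    have haτ : a * τ < 1 := by
      have h1 : a * τ ≤ a * ρ := mul_le_mul_of_nonneg_left hτρ ha0
      linarith only [h1, haρ]
    have hat : ENNReal.ofReal a < t₀ := ht0of a ha0 haτ
    have haσ2 : σ ^ 2 * a ^ 2 ≤ 1 := by
      have h0 : 0 ≤ a * σ := mul_nonneg ha0 hσ.le
      have h1 : a * σ ≤ a * ρ := mul_le_mul_of_nonneg_left hσρ ha0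
      have hle : a * σ ≤ 1 := by linarith only [h1, haρ]
      have h2 : (a * σ) ^ 2 ≤ 1 ^ 2 := pow_le_pow_left₀ h0 hle 2
      have h3 : (a * σ) ^ 2 = σ ^ 2 * a ^ 2 := by ring
      linarith only [h2, h3]
    obtain ⟨C, hCdef⟩ : ∃ x : ℝ, x = 4 / (Real.exp 1 ^ 2 * δ ^ 2) := ⟨_, rfl⟩
    have hC0 : 0 ≤ C := by rw [hCdef]; positivity
    obtain ⟨D, hDdef⟩ : ∃ x : ℝ, x = t ^ 2 / 2 * C * Real.exp (a * m) := ⟨_, rfl⟩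
    -- pointwise bound
    have hptw : ∀ᵐ ω ∂μ, Real.exp (t * (U ω - EU))
        ≤ 1 + t * (U ω - EU) + D * Real.exp (a * V ω) := by
      filter_upwards [hUV, hV0] with ω hVω hV0ω
      rw [hDdef]
      have h1 := exp_le_one_add_add (t * (U ω - EU))
      have hW0 : 0 ≤ V ω + m := by linarith only [hV0ω, hm0]
      have hXW : |U ω - EU| ≤ V ω + m := by
        have h := abs_add_le (U ω) (-EU)
        rw [abs_neg] at h
        rw [sub_eq_add_neg]
        exact le_trans h (add_le_add hVω hEUm)
      have hzW : |t * (U ω - EU)| ≤ s * (V ω + m) := by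
        rw [abs_mul, ← hsdef]
        exact mul_le_mul_of_nonneg_left hXW hs0
      have hsq : (t * (U ω - EU)) ^ 2 ≤ t ^ 2 * (V ω + m) ^ 2 := by
        have h2 : |U ω - EU| ^ 2 ≤ (V ω + m) ^ 2 := pow_le_pow_left₀ (abs_nonneg _) hXW 2
        rw [sq_abs] at h2
        calc (t * (U ω - EU)) ^ 2 = t ^ 2 * (U ω - EU) ^ 2 := by ring
          _ ≤ t ^ 2 * (V ω + m) ^ 2 := mul_le_mul_of_nonneg_left h2 (sq_nonneg t)
      have hexpz : Real.exp |t * (U ω - EU)| ≤ Real.exp (s * (V ω + m)) :=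
        Real.exp_le_exp.mpr hzW
      have hW2 : (V ω + m) ^ 2 ≤ C * Real.exp (δ * (V ω + m)) := by
        rw [hCdef]; exact sq_le_exp_aux hδ0 hW0
      have step1 : (t * (U ω - EU)) ^ 2 / 2 * Real.exp |t * (U ω - EU)|
          ≤ t ^ 2 * (V ω + m) ^ 2 / 2 * Real.exp (s * (V ω + m)) :=
        mul_le_mul (by linarith only [hsq]) hexpz (Real.exp_pos _).le (by positivity)
      have step2 : t ^ 2 * (V ω + m) ^ 2 / 2 * Real.exp (s * (V ω + m))
          ≤ t ^ 2 / 2 * C * Real.exp (δ * (V ω + m)) * Real.exp (s * (V ω + m)) := by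
        apply mul_le_mul_of_nonneg_right _ (Real.exp_pos _).le
        have h3 := mul_le_mul_of_nonneg_left hW2 (by positivity : (0:ℝ) ≤ t ^ 2 / 2)
        linarith only [h3]
      have step3 : Real.exp (δ * (V ω + m)) * Real.exp (s * (V ω + m))
          = Real.exp (a * m) * Real.exp (a * V ω) := by
        rw [← Real.exp_add, ← Real.exp_add]
        congr 1
        rw [hadef]; ring
      have t1 : (t * (U ω - EU)) ^ 2 / 2 * Real.exp |t * (U ω - EU)|
          ≤ t ^ 2 / 2 * C * (Real.exp (a * m) * Real.exp (a * V ω)) := by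
        calc (t * (U ω - EU)) ^ 2 / 2 * Real.exp |t * (U ω - EU)|
            ≤ t ^ 2 * (V ω + m) ^ 2 / 2 * Real.exp (s * (V ω + m)) := step1
          _ ≤ t ^ 2 / 2 * C * Real.exp (δ * (V ω + m)) * Real.exp (s * (V ω + m)) := step2
          _ = t ^ 2 / 2 * C * (Real.exp (δ * (V ω + m)) * Real.exp (s * (V ω + m))) := by
              rw [mul_assoc]
          _ = t ^ 2 / 2 * C * (Real.exp (a * m) * Real.exp (a * V ω)) := by rw [step3]
      have hfin : t ^ 2 / 2 * C * Real.exp (a * m) * Real.exp (a * V ω)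
          = t ^ 2 / 2 * C * (Real.exp (a * m) * Real.exp (a * V ω)) := by ring
      linarith only [h1, t1, hfin]
    -- integrability of the RHS and splitting the integral
    have hXint : Integrable (fun ω => t * (U ω - EU)) μ :=
      (hIntU.sub (integrable_const EU)).const_mul t
    have hXzero : ∫ ω, t * (U ω - EU) ∂μ = 0 := by
      rw [integral_const_mul, integral_sub hIntU (integrable_const EU), integral_const]
      simp [hEUdef]
    have hEint : Integrable (fun ω => Real.exp (a * V ω)) μ := hIntExp a ha0 hat
    have i1 : Integrable (fun ω => 1 + t * (U ω - EU)) μ := (integrable_const 1).add hXint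
    have i2 : Integrable (fun ω => D * Real.exp (a * V ω)) μ := hEint.const_mul D
    have hintR : Integrable
        (fun ω => 1 + t * (U ω - EU) + D * Real.exp (a * V ω)) μ := i1.add i2
    have hmono := integral_mono_ae hIntT hintR hptw
    have hsplit : ∫ ω, (1 + t * (U ω - EU) + D * Real.exp (a * V ω)) ∂μ
        = 1 + D * ∫ ω, Real.exp (a * V ω) ∂μ := by
      rw [integral_add i1 i2, integral_add (integrable_const 1) hXint, hXzero,
        integral_const, integral_const_mul]
      simp
    rw [hsplit] at hmono
    -- numeric conclusion
    obtain ⟨B, hBdef⟩ : ∃ x : ℝ, x = c * Real.exp (σ ^ 2 * a ^ 2 / 2) := ⟨_, rfl⟩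
    have hB0 : 0 < B := by rw [hBdef]; positivity
    have hJa : Real.exp (a * m) ≤ B := by rw [hBdef]; exact hJ a ha0 hat
    have hIa : ∫ ω, Real.exp (a * V ω) ∂μ ≤ B := by rw [hBdef]; exact hmgfR a ha0 hat
    have hInn : 0 ≤ ∫ ω, Real.exp (a * V ω) ∂μ :=
      integral_nonneg fun ω => (Real.exp_pos _).le
    have hprod : Real.exp (a * m) * ∫ ω, Real.exp (a * V ω) ∂μ ≤ B * B :=
      mul_le_mul hJa hIa hInn hB0.le
    have hBB : B * B = c ^ 2 * Real.exp (σ ^ 2 * a ^ 2) := by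
      rw [hBdef]
      have h4 : Real.exp (σ ^ 2 * a ^ 2 / 2) * Real.exp (σ ^ 2 * a ^ 2 / 2)
          = Real.exp (σ ^ 2 * a ^ 2) := by
        rw [← Real.exp_add]; congr 1; ring
      calc c * Real.exp (σ ^ 2 * a ^ 2 / 2) * (c * Real.exp (σ ^ 2 * a ^ 2 / 2))
          = c ^ 2 * (Real.exp (σ ^ 2 * a ^ 2 / 2) * Real.exp (σ ^ 2 * a ^ 2 / 2)) := by ring
        _ = c ^ 2 * Real.exp (σ ^ 2 * a ^ 2) := by rw [h4]
    have hexpa : Real.exp (σ ^ 2 * a ^ 2) ≤ Real.exp 1 := Real.exp_le_exp.mpr haσ2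
    have hprod2 : Real.exp (a * m) * ∫ ω, Real.exp (a * V ω) ∂μ ≤ c ^ 2 * Real.exp 1 := by
      have h5 : c ^ 2 * Real.exp (σ ^ 2 * a ^ 2) ≤ c ^ 2 * Real.exp 1 :=
        mul_le_mul_of_nonneg_left hexpa (by positivity)
      linarith only [hprod, hBB, h5]
    have hDval : D * ∫ ω, Real.exp (a * V ω) ∂μ ≤ t ^ 2 / 2 * C * (c ^ 2 * Real.exp 1) := by
      rw [hDdef]
      have h6 := mul_le_mul_of_nonneg_left hprod2 (by positivity : (0:ℝ) ≤ t ^ 2 / 2 * C)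
      linarith only [h6]
    have hC2 : C ≤ 2 * (σ ^ 2 + τ ^ 2) := by
      rw [hCdef]
      exact small_denom hρ0 hδ0 hδρ hρ2 Real.exp_one_gt_d9.le
    have hCfin : t ^ 2 / 2 * C * (c ^ 2 * Real.exp 1)
        ≤ Real.exp 1 * c ^ 2 * (σ ^ 2 + τ ^ 2) * t ^ 2 := by
      have h7 := mul_le_mul_of_nonneg_left hC2
        (by positivity : (0:ℝ) ≤ t ^ 2 / 2 * (c ^ 2 * Real.exp 1))
      linarith only [h7]
    have h9 := Real.add_one_le_exp (Real.exp 1 * c ^ 2 * (σ ^ 2 + τ ^ 2) * t ^ 2)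
    linarith only [hmono, hDval, hCfin, h9]
  · -- large regime
    push_neg at hreg
    have hsρ : (11/25 : ℝ) < s * ρ := by
      rw [div_lt_iff₀ hρ0] at hreg; linarith
    have hq : ((11:ℝ)/25) ^ 2 ≤ s ^ 2 * (σ ^ 2 + τ ^ 2) := by
      have h1 : ((11:ℝ)/25) ^ 2 ≤ (s * ρ) ^ 2 :=
        pow_le_pow_left₀ (by norm_num) hsρ.le 2
      have h2 : (s * ρ) ^ 2 = s ^ 2 * ρ ^ 2 := by ring
      have h3 : s ^ 2 * ρ ^ 2 ≤ s ^ 2 * (σ ^ 2 + τ ^ 2) :=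
        mul_le_mul_of_nonneg_left hρ2 (sq_nonneg s)
      linarith only [h1, h2, h3]
    have hsm : s * m ≤ L + σ ^ 2 * s ^ 2 / 2 := hbm s hs0 hst
    -- pointwise bound and integral bound
    have hchain : ∫ ω, Real.exp (t * (U ω - EU)) ∂μ
        ≤ Real.exp (s * m) * (c * Real.exp (σ ^ 2 * s ^ 2 / 2)) := by
      have h1 : ∫ ω, Real.exp (t * (U ω - EU)) ∂μ
          ≤ ∫ ω, Real.exp (s * m) * Real.exp (s * V ω) ∂μ := by
        refine integral_mono_ae hIntT ((hIntExp s hs0 hst).const_mul _) ?_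
        filter_upwards [hXbound] with ω h
        rw [← Real.exp_add]
        apply Real.exp_le_exp.mpr
        calc t * (U ω - EU) ≤ |t * (U ω - EU)| := le_abs_self _
          _ ≤ s * (V ω + m) := h
          _ = s * m + s * V ω := by ring
      rw [integral_const_mul] at h1
      exact le_trans h1 (mul_le_mul_of_nonneg_left (hmgfR s hs0 hst) (Real.exp_pos _).le)
    refine le_trans hchain ?_
    have heq : Real.exp (s * m) * (c * Real.exp (σ ^ 2 * s ^ 2 / 2))
        = Real.exp (L + s * m + σ ^ 2 * s ^ 2 / 2) := by
      rw [hcL, ← Real.exp_add, ← Real.exp_add]; ring_nf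
    rw [heq]
    apply Real.exp_le_exp.mpr
    -- final arithmetic
    set u : ℝ := Real.sqrt (2 * L) with hudef
    have hu0 : 0 ≤ u := Real.sqrt_nonneg _
    have hu2 : u ^ 2 = 2 * L := Real.sq_sqrt (by linarith)
    have hc2 : 1 + u ^ 2 + u ^ 4 / 2 ≤ c ^ 2 := by
      have h1 : c ^ 2 = Real.exp (u ^ 2) := by
        rw [hu2, hcL, sq, ← Real.exp_add]
        ring_nf
      have h2 := Real.quadratic_le_exp_of_nonneg (sq_nonneg u)
      rw [← h1] at h2
      calc 1 + u ^ 2 + u ^ 4 / 2 = 1 + u ^ 2 + (u ^ 2) ^ 2 / 2 := by ring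
        _ ≤ c ^ 2 := h2
    have hcore := core_poly u
    have he1 : (2.7182818283:ℝ) ≤ Real.exp 1 := Real.exp_one_gt_d9.le
    have hbase : (1:ℝ) ≤ 1 + u ^ 2 + u ^ 4 / 2 := by
      have h4 : (0:ℝ) ≤ u ^ 4 := by positivity
      linarith only [sq_nonneg u, h4]
    have hD : (1:ℝ) ≤ 2.7182818283 * (1 + u ^ 2 + u ^ 4 / 2) := by
      calc (1:ℝ) ≤ 1 * (1 + u ^ 2 + u ^ 4 / 2) := by linarith only [hbase]
        _ ≤ 2.7182818283 * (1 + u ^ 2 + u ^ 4 / 2) :=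
          mul_le_mul_of_nonneg_right (by norm_num) (by linarith only [hbase])
    have hEc : 2.7182818283 * (1 + u ^ 2 + u ^ 4 / 2) ≤ Real.exp 1 * c ^ 2 :=
      mul_le_mul he1 hc2 (by linarith only [hbase]) (Real.exp_pos 1).le
    have hq0 : (0:ℝ) ≤ s ^ 2 * (σ ^ 2 + τ ^ 2) := by positivity
    have hD' : (1:ℝ) ≤ Real.exp 1 * c ^ 2 := le_trans hD hEc
    have h3a : u ^ 2 ≤ (11/25 : ℝ) ^ 2 * (Real.exp 1 * c ^ 2 - 1) := by
      refine le_trans hcore ?_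
      exact mul_le_mul_of_nonneg_left (sub_le_sub_right hEc 1) (by norm_num)
    have h3 : u ^ 2 ≤ (Real.exp 1 * c ^ 2 - 1) * (s ^ 2 * (σ ^ 2 + τ ^ 2)) := by
      have h0 : (0:ℝ) ≤ Real.exp 1 * c ^ 2 - 1 := by linarith only [hD']
      calc u ^ 2 ≤ (11/25 : ℝ) ^ 2 * (Real.exp 1 * c ^ 2 - 1) := h3a
        _ ≤ (s ^ 2 * (σ ^ 2 + τ ^ 2)) * (Real.exp 1 * c ^ 2 - 1) :=
          mul_le_mul_of_nonneg_right hq h0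
        _ = (Real.exp 1 * c ^ 2 - 1) * (s ^ 2 * (σ ^ 2 + τ ^ 2)) := mul_comm _ _
    have hσs : σ ^ 2 * s ^ 2 ≤ s ^ 2 * (σ ^ 2 + τ ^ 2) := by
      have h5 : s ^ 2 * σ ^ 2 ≤ s ^ 2 * (σ ^ 2 + τ ^ 2) :=
        mul_le_mul_of_nonneg_left (by linarith only [sq_nonneg τ]) (sq_nonneg s)
      linarith only [h5]
    have hfin : L + s * m + σ ^ 2 * s ^ 2 / 2
        ≤ (Real.exp 1 * c ^ 2) * (s ^ 2 * (σ ^ 2 + τ ^ 2)) := by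
      linarith only [h3, hsm, hu2, hσs]
    calc L + s * m + σ ^ 2 * s ^ 2 / 2
        ≤ (Real.exp 1 * c ^ 2) * (s ^ 2 * (σ ^ 2 + τ ^ 2)) := hfin
      _ = Real.exp 1 * c ^ 2 * (σ ^ 2 + τ ^ 2) * t ^ 2 := by rw [hts]; ring
end
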